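/- arXiv:1807.10389 — 10 statements merged into one kernel-verified Lean document; each statement's English description precedes it below -/
import Mathlib

section
/- In the group G = ⟨a, b ; a^m = 1, b^n = 1, b⁻¹ab = a^k⟩ with gcd(m, k-1) = 1 and n the multiplicative order of k mod m, for all i, r ∈ ℤ_m and j, s ∈ ℤ_n, the commutator [a^i b^j, a^r b^s] equals a^N where N ≡ i·k^j·(k^s - 1) - r·k^s·(k^j - 1) (mod m). -/
/-- Relations for the presentation
`⟨a, b ; a^m = 1, b^n = 1, b⁻¹ab = a^k⟩`, where `a` is `FreeGroup.of true`
and `b` is `FreeGroup.of false`. -/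
def mcRels (m n k : ℕ) : Set (FreeGroup Bool) :=
  {FreeGroup.of true ^ m, FreeGroup.of false ^ n,
    (FreeGroup.of false)⁻¹ * FreeGroup.of true * FreeGroup.of false *
      (FreeGroup.of true ^ k)⁻¹}

/-- The metacyclic group `G(m,n,k) = ⟨a, b ; a^m = 1, b^n = 1, b⁻¹ab = a^k⟩`. -/
def McGroup (m n k : ℕ) := PresentedGroup (mcRels m n k)

instance (m n k : ℕ) : Group (McGroup m n k) := by
  unfold McGroup; infer_instance

/-- The generator `a` of `G(m,n,k)`. -/
def McGroup.a (m n k : ℕ) : McGroup m n k := PresentedGroup.of true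

/-- The generator `b` of `G(m,n,k)`. -/
def McGroup.b (m n k : ℕ) : McGroup m n k := PresentedGroup.of false

/-- `n = ind_m(k)`: `n` is the least positive integer with `k^n ≡ 1 (mod m)`. -/
def IsIndex (m k n : ℕ) : Prop :=
  0 < n ∧ k ^ n ≡ 1 [MOD m] ∧ ∀ d : ℕ, 0 < d → k ^ d ≡ 1 [MOD m] → n ≤ d


namespace McGroup
variable {m n k : ℕ}

lemma rel_one {x : FreeGroup Bool} (hx : x ∈ mcRels m n k) :
    PresentedGroup.mk (mcRels m n k) x = 1 :=
  (QuotientGroup.eq_one_iff x).2 (Subgroup.subset_normalClosure hx)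

lemma a_pow_m : a m n k ^ m = 1 := by
  have := rel_one (m := m) (n := n) (k := k) (by left; rfl)
  rw [map_pow] at this
  exact this

lemma conj_a : (b m n k)⁻¹ * a m n k * b m n k = a m n k ^ k := by
  have := rel_one (m := m) (n := n) (k := k) (by right; right; rfl)
  rw [map_mul, map_mul, map_mul, map_inv, map_inv, map_pow] at this
  exact mul_inv_eq_one.mp this

lemma conjA_zpow (t : ℤ) : (b m n k)⁻¹ * a m n k ^ t * b m n k = a m n k ^ (t * k) := by
  have h : (b m n k)⁻¹ * a m n k ^ t * b m n k = ((b m n k)⁻¹ * a m n k * b m n k) ^ t := by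
    have := conj_zpow (a := (b m n k)⁻¹) (b := a m n k) (i := t)
    rw [inv_inv] at this
    exact this.symm
  rw [h, conj_a, ← zpow_natCast (a m n k) k, ← zpow_mul, mul_comm]

lemma comm_rule (t : ℤ) (j : ℕ) :
    a m n k ^ t * b m n k ^ j = b m n k ^ j * a m n k ^ (t * (k : ℤ) ^ j) := by
  induction j with
  | zero => simp
  | succ j ih =>
    have step := conjA_zpow (m := m) (n := n) (k := k) (t * (k : ℤ) ^ j)
    have h1 : a m n k ^ (t * (k:ℤ)^j) * b m n k = b m n k * a m n k ^ (t * (k:ℤ)^j * k) := by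
      rw [← step]; group
    calc a m n k ^ t * b m n k ^ (j+1) = (a m n k ^ t * b m n k ^ j) * b m n k := by
          rw [pow_succ, mul_assoc]
      _ = b m n k ^ j * (a m n k ^ (t * (k:ℤ)^j) * b m n k) := by rw [ih, mul_assoc]
      _ = b m n k ^ (j+1) * a m n k ^ (t * (k:ℤ)^(j+1)) := by
          rw [h1, ← mul_assoc, ← pow_succ, pow_succ (k:ℤ), ← mul_assoc]

lemma a_zpow_congr {z w : ℤ} (h : (z : ZMod m) = (w : ZMod m)) :
    a m n k ^ z = a m n k ^ w := by
  have hd : (m : ℤ) ∣ z - w := by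
    have := (ZMod.intCast_eq_intCast_iff' z w m).mp h
    exact Int.ModEq.dvd this.symm
  obtain ⟨c, hc⟩ := hd
  have : z = w + m * c := by linarith
  rw [this, zpow_add, zpow_mul, zpow_natCast, a_pow_m, one_zpow, mul_one]

lemma prod_form (t u : ℤ) (j s : ℕ) :
    a m n k ^ t * b m n k ^ j * (a m n k ^ u * b m n k ^ s) =
      b m n k ^ (j + s) * a m n k ^ (t * (k:ℤ) ^ (j + s) + u * (k:ℤ) ^ s) := by
  calc a m n k ^ t * b m n k ^ j * (a m n k ^ u * b m n k ^ s)
      = a m n k ^ t * b m n k ^ j * (b m n k ^ s * a m n k ^ (u * (k:ℤ)^s)) := by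
        rw [comm_rule u s]
    _ = (a m n k ^ t * b m n k ^ (j + s)) * a m n k ^ (u * (k:ℤ)^s) := by
        rw [pow_add]; group
    _ = b m n k ^ (j + s) * a m n k ^ (t * (k:ℤ)^(j+s)) * a m n k ^ (u * (k:ℤ)^s) := by
        rw [comm_rule]
    _ = b m n k ^ (j + s) * a m n k ^ (t * (k:ℤ) ^ (j + s) + u * (k:ℤ) ^ s) := by
        rw [zpow_add, mul_assoc]

end McGroup

/-- in `G(m,n,k)` with `gcd(m,k-1) = 1` and `n = ind_m(k)`,
the commutator `[a^i b^j, a^r b^s]` equals `a^N` whenever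
`N ≡ i·k^j·(k^s - 1) - r·k^s·(k^j - 1) (mod m)`. -/
theorem stmt_1 (m n k : ℕ) (hm : 0 < m) (hk : 0 < k)
    (hcop : Nat.gcd m (k - 1) = 1) (hind : IsIndex m k n)
    (i r j s : ℕ) (N : ℤ)
    (hN : (N : ZMod m) =
      (i : ZMod m) * (k : ZMod m) ^ j * ((k : ZMod m) ^ s - 1) -
        (r : ZMod m) * (k : ZMod m) ^ s * ((k : ZMod m) ^ j - 1)) :
    (McGroup.a m n k ^ i * McGroup.b m n k ^ j)⁻¹ *
        (McGroup.a m n k ^ r * McGroup.b m n k ^ s)⁻¹ *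
        (McGroup.a m n k ^ i * McGroup.b m n k ^ j) *
        (McGroup.a m n k ^ r * McGroup.b m n k ^ s) =
      McGroup.a m n k ^ N := by
  set A := McGroup.a m n k with hA
  set B := McGroup.b m n k with hB
  have hAi : A ^ i = A ^ (i:ℤ) := (zpow_natCast A i).symm
  have hAr : A ^ r = A ^ (r:ℤ) := (zpow_natCast A r).symm
  have key : (A ^ (i:ℤ) * B ^ j) * (A ^ (r:ℤ) * B ^ s) =
      (A ^ (r:ℤ) * B ^ s) * (A ^ (i:ℤ) * B ^ j) * A ^ N := by
    rw [McGroup.prod_form, McGroup.prod_form, mul_assoc, ← zpow_add,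
      Nat.add_comm s j]
    congr 1
    apply McGroup.a_zpow_congr
    push_cast
    rw [hN]
    ring
  have goal2 : (A ^ (i:ℤ) * B ^ j)⁻¹ * (A ^ (r:ℤ) * B ^ s)⁻¹ *
      (A ^ (i:ℤ) * B ^ j) * (A ^ (r:ℤ) * B ^ s) =
      (A ^ (i:ℤ) * B ^ j)⁻¹ * (A ^ (r:ℤ) * B ^ s)⁻¹ *
      ((A ^ (r:ℤ) * B ^ s) * (A ^ (i:ℤ) * B ^ j) * A ^ N) := by
    rw [← key]; group
  rw [hAi, hAr, goal2]
  group
end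

section
/- Let G = ⟨a, b ; a^m = 1, b^n = a^l, b⁻¹ab = a^k⟩ with k^n ≡ 1 (mod m) and l(k-1) ≡ 0 (mod m). Then G has trivial centre if and only if gcd(m, k-1) = 1 and n is the multiplicative order of k modulo m. -/
/-- Relations for the Hölder presentation
`⟨a, b ; a^m = 1, b^n = a^l, b⁻¹ab = a^k⟩`, with `a = FreeGroup.of true`,
`b = FreeGroup.of false`. -/
def holderRels (m n k l : ℕ) : Set (FreeGroup Bool) :=
  {FreeGroup.of true ^ m,
    FreeGroup.of false ^ n * (FreeGroup.of true ^ l)⁻¹,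
    (FreeGroup.of false)⁻¹ * FreeGroup.of true * FreeGroup.of false *
      (FreeGroup.of true ^ k)⁻¹}

/-- The group `⟨a, b ; a^m = 1, b^n = a^l, b⁻¹ab = a^k⟩`. -/
def HolderGroup (m n k l : ℕ) := PresentedGroup (holderRels m n k l)

instance (m n k l : ℕ) : Group (HolderGroup m n k l) := by
  unfold HolderGroup; infer_instance

namespace HolderAux

@[ext]
structure Model (m : ℕ) (u : (ZMod m)ˣ) where
  x : ZMod m
  i : ℤ

namespace Model

variable {m : ℕ} {u : (ZMod m)ˣ}

instance : Mul (Model m u) := ⟨fun a b => ⟨a.x + u ^ a.i • b.x, a.i + b.i⟩⟩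
instance : One (Model m u) := ⟨⟨0, 0⟩⟩
instance : Inv (Model m u) := ⟨fun a => ⟨-(u ^ (-a.i) • a.x), -a.i⟩⟩

@[simp] lemma mul_x (a b : Model m u) : (a * b).x = a.x + u ^ a.i • b.x := rfl
@[simp] lemma mul_i (a b : Model m u) : (a * b).i = a.i + b.i := rfl
@[simp] lemma one_x : (1 : Model m u).x = 0 := rfl
@[simp] lemma one_i : (1 : Model m u).i = 0 := rfl
@[simp] lemma inv_x (a : Model m u) : (a⁻¹).x = -(u ^ (-a.i) • a.x) := rfl
@[simp] lemma inv_i (a : Model m u) : (a⁻¹).i = -a.i := rfl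

instance : Group (Model m u) where
  mul_assoc a b c := by ext <;> simp [zpow_add, mul_smul, smul_add, add_assoc]
  one_mul a := by ext <;> simp
  mul_one a := by ext <;> simp
  inv_mul_cancel a := by ext <;> simp [← mul_smul]

lemma fixed_zpow {w : ZMod m} (hw : u • w = w) : ∀ i : ℤ, u ^ i • w = w := by
  have hw' : u⁻¹ • w = w := by
    conv_lhs => rw [← hw]
    rw [← mul_smul, inv_mul_cancel, one_smul]
  intro i
  induction i using Int.induction_on with
  | zero => simp
  | succ j ih => rw [zpow_add, zpow_one, mul_smul, hw, ih]
  | pred j ih => rw [sub_eq_add_neg, zpow_add, mul_smul, zpow_neg_one, hw', ih]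

section c
variable (w : ZMod m) (e : ℤ)

/-- the central element. -/
def c (w : ZMod m) (e : ℤ) : Model m u := ⟨w, e⟩

variable {w e}
variable (hw : u • w = w) (he : u ^ e = 1)

include hw he in
lemma c_zpow : ∀ t : ℤ, (c w e : Model m u) ^ t = ⟨t • w, t * e⟩ := by
  have key : ∀ t : ℤ, u ^ (t * e) = 1 := fun t => by
    rw [mul_comm, zpow_mul, he, one_zpow]
  intro t
  induction t using Int.induction_on with
  | zero => ext <;> simp
  | succ j ih =>
      rw [zpow_add, zpow_one, ih]
      ext
      · show (j : ℤ) • w + u ^ ((j:ℤ) * e) • w = ((j:ℤ)+1) • w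
        rw [key, one_smul, add_smul, one_smul]
      · show (j : ℤ) * e + e = ((j:ℤ)+1) * e
        ring
  | pred j ih =>
      rw [sub_eq_add_neg, zpow_add, ih, zpow_neg_one]
      ext
      · show (-(j:ℤ)) • w + u ^ (-(j:ℤ)*e) • (c w e : Model m u)⁻¹.x = (-(j:ℤ)+ -1) • w
        have h0 : ((c w e : Model m u))⁻¹.x = -(u ^ (-e) • w) := rfl
        rw [h0, fixed_zpow hw, key, one_smul, add_smul, neg_one_smul]
      · show -(j:ℤ) * e + -e = (-(j:ℤ) + -1) * e
        ring

include hw he in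
lemma c_central (g : Model m u) : (c w e : Model m u) * g = g * c w e := by
  ext
  · show w + u ^ e • g.x = g.x + u ^ g.i • w
    rw [he, one_smul, fixed_zpow hw, add_comm]
  · show e + g.i = g.i + e
    ring

include hw he in
lemma commute_c (g : Model m u) : ∀ z ∈ Subgroup.zpowers (c w e : Model m u), z * g = g * z := by
  intro z hz
  obtain ⟨t, rfl⟩ := Subgroup.mem_zpowers_iff.mp hz
  have hcom : Commute (c w e : Model m u) g := (c_central hw he g)
  exact (hcom.zpow_left t).eq

include hw he in
lemma normal_c : (Subgroup.zpowers (c w e : Model m u)).Normal := by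
  constructor
  intro z hz g
  rw [← commute_c hw he g z hz, mul_assoc, mul_inv_cancel, mul_one]
  exact hz

include hw in
lemma mem_zpowers_c {g : Model m u} (he : u ^ e = 1) :
    g ∈ Subgroup.zpowers (c w e : Model m u) ↔ ∃ t : ℤ, g.x = t • w ∧ g.i = t * e := by
  rw [Subgroup.mem_zpowers_iff]
  constructor
  · rintro ⟨t, rfl⟩
    exact ⟨t, by rw [c_zpow hw he], by rw [c_zpow hw he]⟩
  · rintro ⟨t, hx, hi⟩
    refine ⟨t, ?_⟩
    rw [c_zpow hw he]
    ext
    · exact hx.symm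
    · exact hi.symm

include hw he in
lemma eq_one_of_mem_zpowers {g : Model m u} (he' : e ≠ 0)
    (hg : g ∈ Subgroup.zpowers (c w e : Model m u)) (hgi : g.i = 0) : g = 1 := by
  obtain ⟨t, hx, hi⟩ := (mem_zpowers_c hw he).mp hg
  rw [hgi] at hi
  have ht : t = 0 := by
    rcases mul_eq_zero.mp hi.symm with h | h
    · exact h
    · exact absurd h he'
  ext
  · rw [hx, ht, zero_smul, one_x]
  · rw [hgi, one_i]

end c

lemma a_pow (x : ZMod m) (s : ℕ) : (⟨x, 0⟩ : Model m u) ^ s = ⟨s • x, 0⟩ := by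
  induction s with
  | zero => ext <;> simp
  | succ j ih =>
      rw [pow_succ, ih]
      ext
      · show j • x + u ^ (0:ℤ) • x = (j + 1) • x
        rw [zpow_zero, one_smul, add_smul, one_smul]
      · show (0:ℤ) + 0 = 0
        simp

lemma b_zpow : ∀ i : ℤ, (⟨0, 1⟩ : Model m u) ^ i = ⟨0, i⟩ := by
  intro i
  induction i using Int.induction_on with
  | zero => ext <;> simp
  | succ j ih => rw [zpow_add_one, ih]; ext <;> simp
  | pred j ih => rw [sub_eq_add_neg, zpow_add, ih, zpow_neg_one]; ext <;> simp

end Model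


section PSide
variable {G : Type*} [Group G] {m : ℕ} [NeZero m]

/-- `Phi A x = A ^ x.val`. -/
def Phi (A : G) (x : ZMod m) : G := A ^ x.val

variable {A B : G}

section basic
variable (hA : A ^ m = 1)
include hA

lemma pow_mod (s : ℕ) : A ^ (s % m) = A ^ s := by
  conv_rhs => rw [← Nat.mod_add_div s m]
  rw [pow_add, pow_mul, hA, one_pow, mul_one]

lemma Phi_natCast (s : ℕ) : Phi A (s : ZMod m) = A ^ s := by
  rw [Phi, ZMod.val_natCast, pow_mod hA]

lemma Phi_add (x y : ZMod m) : Phi A (x + y) = Phi A x * Phi A y := by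
  rw [Phi, ZMod.val_add, pow_mod hA, pow_add]; rfl

lemma Phi_zero : Phi A (0 : ZMod m) = 1 := by
  have := Phi_natCast (A := A) hA 0
  simpa using this

lemma Phi_neg (x : ZMod m) : Phi A (-x) = (Phi A x)⁻¹ := by
  have h : Phi A (-x) * Phi A x = 1 := by
    rw [← Phi_add hA, neg_add_cancel, Phi_zero hA]
  exact eq_inv_of_mul_eq_one_left h

end basic

section conj
variable {n k l : ℕ} {v : (ZMod m)ˣ}
variable (hA : A ^ m = 1) (hconj : B⁻¹ * A * B = A ^ k) (hv : (v : ZMod m) = (k : ZMod m))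
include hA hconj hv

lemma conj_neg_one (y : ZMod m) : B⁻¹ * Phi A y * B = Phi A (v⁻¹⁻¹ • y) := by
  have h1 : B⁻¹ * Phi A y * B = (B⁻¹ * A * B) ^ y.val := by
    rw [Phi]
    calc B⁻¹ * A ^ y.val * B = B⁻¹ * A ^ y.val * B⁻¹⁻¹ := by rw [inv_inv]
    _ = (B⁻¹ * A * B⁻¹⁻¹) ^ y.val := by rw [conj_pow]
    _ = (B⁻¹ * A * B) ^ y.val := by rw [inv_inv]
  rw [h1, hconj, ← pow_mul, ← Phi_natCast hA]
  congr 1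
  rw [inv_inv, Units.smul_def, hv]
  push_cast
  rw [ZMod.natCast_val, ZMod.cast_id, smul_eq_mul]

lemma conj_one (y : ZMod m) : B * Phi A y * B⁻¹ = Phi A (v⁻¹ • y) := by
  have h := conj_neg_one hA hconj hv (v⁻¹ • y)
  have h2 : v⁻¹⁻¹ • v⁻¹ • y = y := by rw [← mul_smul, inv_inv, mul_inv_cancel, one_smul]
  rw [h2] at h
  calc B * Phi A y * B⁻¹ = B * (B⁻¹ * Phi A (v⁻¹ • y) * B) * B⁻¹ := by rw [h]
  _ = Phi A (v⁻¹ • y) := by group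

lemma conj_zpow (i : ℤ) (y : ZMod m) :
    B ^ i * Phi A y * B ^ (-i) = Phi A (v⁻¹ ^ i • y) := by
  induction i using Int.induction_on with
  | zero => simp [Phi]
  | succ j ih =>
      have step : B ^ ((j:ℤ)+1) * Phi A y * B ^ (-((j:ℤ)+1)) =
          B * (B ^ (j:ℤ) * Phi A y * B ^ (-(j:ℤ))) * B⁻¹ := by group
      rw [step, ih, conj_one hA hconj hv, ← mul_smul]
      have hgp : v⁻¹ * v⁻¹ ^ (j:ℤ) = v⁻¹ ^ ((j:ℤ)+1) := by group
      rw [hgp]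
  | pred j ih =>
      have step : B ^ (-(j:ℤ)-1) * Phi A y * B ^ (-(-(j:ℤ)-1)) =
          B⁻¹ * (B ^ (-(j:ℤ)) * Phi A y * B ^ ((j:ℤ))) * B := by group
      rw [show -(-(j:ℤ)) = (j:ℤ) from by ring] at ih
      rw [step, ih, conj_neg_one hA hconj hv, ← mul_smul, inv_inv]
      have hgp : v * v⁻¹ ^ (-(j:ℤ)) = v⁻¹ ^ (-(j:ℤ)-1) := by group
      rw [hgp]

end conj
end PSide

section Theta
variable {G : Type*} [Group G] {m : ℕ} [NeZero m] {A B : G} {n k l : ℕ} {v : (ZMod m)ˣ}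
variable (hA : A ^ m = 1) (hconj : B⁻¹ * A * B = A ^ k) (hv : (v : ZMod m) = (k : ZMod m))

/-- The homomorphism from the model to `G`. -/
def theta (hA : A ^ m = 1) (hconj : B⁻¹ * A * B = A ^ k) (hv : (v : ZMod m) = (k : ZMod m)) :
    Model m v⁻¹ →* G :=
  MonoidHom.mk' (fun g => Phi A g.x * B ^ g.i) (by
    intro a b
    show Phi A (a.x + v⁻¹ ^ a.i • b.x) * B ^ (a.i + b.i) =
      (Phi A a.x * B ^ a.i) * (Phi A b.x * B ^ b.i)
    rw [Phi_add hA, ← conj_zpow hA hconj hv a.i b.x]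
    group)

lemma theta_apply (g : Model m v⁻¹) : theta hA hconj hv g = Phi A g.x * B ^ g.i := rfl

include hA hconj hv in
lemma theta_c (hBn : B ^ n = A ^ l) :
    theta hA hconj hv (Model.c (-(l : ZMod m)) (n : ℤ)) = 1 := by
  show Phi A (-(l : ZMod m)) * B ^ ((n : ℤ)) = 1
  rw [zpow_natCast, hBn, ← Phi_natCast hA, Phi_neg hA, inv_mul_cancel]

end Theta

lemma center_eq_bot_of_mulEquiv {G H : Type*} [Group G] [Group H] (e : G ≃* H)
    (hG : Subgroup.center G = ⊥) : Subgroup.center H = ⊥ := by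
  rw [Subgroup.eq_bot_iff_forall]
  intro z hz
  have h1 : e.symm z ∈ Subgroup.center G := by
    rw [Subgroup.mem_center_iff]
    intro g
    apply e.injective
    rw [map_mul, map_mul, e.apply_symm_apply]
    exact (Subgroup.mem_center_iff.mp hz) (e g)
  rw [hG, Subgroup.mem_bot] at h1
  have := congrArg e h1
  rwa [e.apply_symm_apply, map_one] at this

lemma center_eq_bot_iff_of_mulEquiv {G H : Type*} [Group G] [Group H] (e : G ≃* H) :
    Subgroup.center G = ⊥ ↔ Subgroup.center H = ⊥ :=
  ⟨center_eq_bot_of_mulEquiv e, center_eq_bot_of_mulEquiv e.symm⟩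

end HolderAux


open HolderAux

/-- `G = ⟨a, b ; a^m = 1, b^n = a^l, b⁻¹ab = a^k⟩` with
`k^n ≡ 1 (mod m)` and `l(k-1) ≡ 0 (mod m)` has trivial centre iff
`gcd(m, k-1) = 1` and `n` is the multiplicative order of `k` mod `m`. -/
theorem stmt_2 (m n k l : ℕ) (hm : 0 < m) (hn : 0 < n) (hk : 0 < k)
    (hl : 0 < l) (h1 : k ^ n ≡ 1 [MOD m]) (h2 : l * (k - 1) ≡ 0 [MOD m]) :
    Subgroup.center (HolderGroup m n k l) = ⊥ ↔
      Nat.gcd m (k - 1) = 1 ∧ IsIndex m k n := by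
  haveI : NeZero m := ⟨hm.ne'⟩
  classical
  -- basic unit facts
  have h1' : (k : ZMod m) ^ n = 1 := by
    have := (ZMod.natCast_eq_natCast_iff (k ^ n) 1 m).mpr h1
    push_cast at this
    exact this
  have hvu : IsUnit (k : ZMod m) := by
    apply IsUnit.of_mul_eq_one ((k : ZMod m) ^ (n - 1))
    rw [← pow_succ', Nat.sub_add_cancel hn]
    exact h1'
  obtain ⟨v, hv⟩ := hvu
  have hvn : v ^ n = 1 := Units.ext (by rw [Units.val_pow_eq_pow_val, hv, Units.val_one]; exact h1')
  have hun : (v⁻¹ : (ZMod m)ˣ) ^ (n : ℤ) = 1 := by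
    rw [zpow_natCast, inv_pow, hvn, inv_one]
  -- l facts
  have hkl : (k : ZMod m) * (l : ZMod m) = (l : ZMod m) := by
    have h2' : ((l * (k - 1) : ℕ) : ZMod m) = ((0 : ℕ) : ZMod m) :=
      (ZMod.natCast_eq_natCast_iff _ _ _).mpr h2
    rw [Nat.cast_mul, Nat.cast_sub hk] at h2'
    push_cast at h2'
    linear_combination h2'
  have hvl : v • (l : ZMod m) = (l : ZMod m) := by rw [Units.smul_def, hv, smul_eq_mul]; exact hkl
  have hw : (v⁻¹ : (ZMod m)ˣ) • (-(l : ZMod m)) = -(l : ZMod m) := by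
    rw [smul_neg]
    conv_lhs => rw [← hvl]
    rw [inv_smul_smul]
  set Z := Subgroup.zpowers (Model.c (-(l : ZMod m)) (n : ℤ) : Model m v⁻¹) with hZdef
  haveI hZN : Z.Normal := Model.normal_c hw hun
  set Q := Model m v⁻¹ ⧸ Z with hQdef
  -- presented group side
  set A : PresentedGroup (holderRels m n k l) := PresentedGroup.of true with hAdef
  set B : PresentedGroup (holderRels m n k l) := PresentedGroup.of false with hBdef
  have hrel : ∀ r ∈ holderRels m n k l, PresentedGroup.mk (holderRels m n k l) r = 1 := fun r hr =>
    (QuotientGroup.eq_one_iff r).mpr (Subgroup.subset_normalClosure hr)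
  have hA : A ^ m = 1 := by
    have := hrel _ (Set.mem_insert _ _)
    rwa [map_pow] at this
  have hBn : B ^ n = A ^ l := by
    have := hrel _ (Set.mem_insert_of_mem _ (Set.mem_insert _ _))
    rw [map_mul, map_inv, map_pow, map_pow] at this
    exact mul_inv_eq_one.mp this
  have hconj : B⁻¹ * A * B = A ^ k := by
    have := hrel _ (Set.mem_insert_of_mem _ (Set.mem_insert_of_mem _ rfl))
    rw [map_mul, map_mul, map_mul, map_inv, map_inv, map_pow] at this
    exact mul_inv_eq_one.mp this
  -- the forward homomorphism π
  set qmk : Model m v⁻¹ →* Q := QuotientGroup.mk' Z with hqmkdef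
  set α : Q := qmk ⟨1, 0⟩ with hαdef
  set β : Q := qmk ⟨0, 1⟩ with hβdef
  have hcM : (Model.c (-(l : ZMod m)) (n : ℤ) : Model m v⁻¹) ∈ Z := Subgroup.mem_zpowers _
  have e1m : ((⟨1, 0⟩ : Model m v⁻¹)) ^ m = 1 := by
    rw [Model.a_pow]
    ext
    · show (m : ℕ) • (1 : ZMod m) = (0 : ZMod m)
      rw [nsmul_eq_mul, mul_one, ZMod.natCast_self]
    · rfl
  have e2m : (⟨0, 1⟩ : Model m v⁻¹) ^ n * ((⟨1, 0⟩ : Model m v⁻¹) ^ l)⁻¹ =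
      Model.c (-(l : ZMod m)) (n : ℤ) := by
    rw [← zpow_natCast, Model.b_zpow, Model.a_pow]
    ext
    · show (0 : ZMod m) + (v⁻¹ : (ZMod m)ˣ) ^ (n : ℤ) •
        (-((v⁻¹ : (ZMod m)ˣ) ^ (-(0:ℤ)) • ((l : ℕ) • (1 : ZMod m)))) = -(l : ZMod m)
      rw [hun, one_smul, neg_zero, zpow_zero, one_smul, nsmul_eq_mul, mul_one, zero_add]
    · show (n : ℤ) + -(0 : ℤ) = (n : ℤ)
      ring
  have e3m : (⟨0, 1⟩ : Model m v⁻¹)⁻¹ * ⟨1, 0⟩ * ⟨0, 1⟩ * ((⟨1, 0⟩ : Model m v⁻¹) ^ k)⁻¹ = 1 := by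
    have hbinv : (⟨0, 1⟩ : Model m v⁻¹)⁻¹ = ⟨0, -1⟩ := by
      apply inv_eq_of_mul_eq_one_right
      ext
      · show (0 : ZMod m) + (v⁻¹ : (ZMod m)ˣ) ^ (1 : ℤ) • (0 : ZMod m) = 0
        rw [smul_zero, add_zero]
      · show (1 : ℤ) + -1 = 0
        ring
    have hainv : ((⟨1, 0⟩ : Model m v⁻¹) ^ k)⁻¹ = ⟨-(k : ZMod m), 0⟩ := by
      rw [Model.a_pow]
      apply inv_eq_of_mul_eq_one_right
      ext
      · show (k : ℕ) • (1 : ZMod m) + (v⁻¹ : (ZMod m)ˣ) ^ (0 : ℤ) • (-(k : ZMod m)) = 0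
        rw [zpow_zero, one_smul, nsmul_eq_mul, mul_one]
        ring
      · show (0 : ℤ) + 0 = 0
        ring
    rw [hbinv, hainv]
    have hsm : (v⁻¹ : (ZMod m)ˣ) ^ (-1 : ℤ) • (1 : ZMod m) = (k : ZMod m) := by
      rw [zpow_neg_one, inv_inv, Units.smul_def, hv, smul_eq_mul, mul_one]
    ext
    · show (((0 : ZMod m) + (v⁻¹ : (ZMod m)ˣ) ^ (-1 : ℤ) • (1 : ZMod m)) +
          (v⁻¹ : (ZMod m)ˣ) ^ ((-1 : ℤ) + 0) • (0 : ZMod m)) +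
          (v⁻¹ : (ZMod m)ˣ) ^ (((-1 : ℤ) + 0) + 1) • (-(k : ZMod m)) = (0 : ZMod m)
      rw [zero_add, smul_zero, add_zero, hsm, show ((-1 : ℤ) + 0) + 1 = 0 from by ring,
        zpow_zero, one_smul]
      ring
    · show (((-1 : ℤ) + 0) + 1) + 0 = (0 : ℤ)
      ring
  have hrelsQ : ∀ r ∈ holderRels m n k l,
      FreeGroup.lift (fun t => cond t α β) r = 1 := by
    intro r hr
    simp only [holderRels, Set.mem_insert_iff, Set.mem_singleton_iff] at hr
    rcases hr with rfl | rfl | rfl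
    · rw [map_pow, FreeGroup.lift_apply_of]
      show α ^ m = 1
      rw [hαdef, ← map_pow, e1m, map_one]
    · rw [map_mul, map_inv, map_pow, map_pow, FreeGroup.lift_apply_of, FreeGroup.lift_apply_of]
      show β ^ n * (α ^ l)⁻¹ = 1
      rw [hβdef, hαdef, ← map_pow, ← map_pow, ← map_inv, ← map_mul, e2m]
      exact (QuotientGroup.eq_one_iff _).mpr hcM
    · rw [map_mul, map_mul, map_mul, map_inv, map_inv, map_pow,
        FreeGroup.lift_apply_of, FreeGroup.lift_apply_of]
      show β⁻¹ * α * β * (α ^ k)⁻¹ = 1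
      rw [hβdef, hαdef, ← map_inv, ← map_pow, ← map_inv, ← map_mul, ← map_mul, ← map_mul, e3m,
        map_one]
  set π : PresentedGroup (holderRels m n k l) →* Q := PresentedGroup.toGroup hrelsQ with hπdef
  have hπA : π A = α := PresentedGroup.toGroup.of hrelsQ
  have hπB : π B = β := PresentedGroup.toGroup.of hrelsQ
  -- the backward homomorphism θ'
  set θ : Model m v⁻¹ →* PresentedGroup (holderRels m n k l) := theta hA hconj hv with hθdef
  have hker : Z ≤ θ.ker := by
    intro z hz
    obtain ⟨t, rfl⟩ := Subgroup.mem_zpowers_iff.mp hz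
    rw [MonoidHom.mem_ker, map_zpow, hθdef, theta_c hA hconj hv hBn, one_zpow]
  set θ' : Q →* PresentedGroup (holderRels m n k l) := QuotientGroup.lift Z θ hker with hθ'def
  have hcomp1 : θ'.comp π = MonoidHom.id _ := by
    apply PresentedGroup.ext
    intro t
    cases t
    · show θ' (π B) = B
      rw [hπB]
      show θ (⟨0, 1⟩ : Model m v⁻¹) = B
      rw [hθdef, theta_apply, Phi_zero hA, one_mul, zpow_one]
    · show θ' (π A) = A
      rw [hπA]
      show θ (⟨1, 0⟩ : Model m v⁻¹) = A
      rw [hθdef, theta_apply, zpow_zero, mul_one, show (1 : ZMod m) = ((1 : ℕ) : ZMod m) from by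
        push_cast; rfl, Phi_natCast hA, pow_one]
  have hcomp2 : π.comp θ' = MonoidHom.id Q := by
    refine QuotientGroup.monoidHom_ext Z (MonoidHom.ext fun g => ?_)
    simp only [MonoidHom.comp_apply, MonoidHom.id_apply]
    have hrep : (⟨1, 0⟩ : Model m v⁻¹) ^ (g.x.val) * (⟨0, 1⟩ : Model m v⁻¹) ^ (g.i) = g := by
      rw [Model.a_pow, Model.b_zpow]
      ext
      · show g.x.val • (1 : ZMod m) + (v⁻¹ : (ZMod m)ˣ) ^ (0 : ℤ) • (0 : ZMod m) = g.x
        rw [smul_zero, add_zero, nsmul_eq_mul, mul_one]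
        exact ZMod.natCast_rightInverse g.x
      · show (0 : ℤ) + g.i = g.i
        ring
    calc π (θ' (QuotientGroup.mk' Z g)) = π (A ^ g.x.val * B ^ g.i) := rfl
    _ = (π A) ^ g.x.val * (π B) ^ g.i := by rw [map_mul, map_pow, map_zpow]
    _ = QuotientGroup.mk' Z g := by
        rw [hπA, hπB, hαdef, hβdef, ← map_pow, ← map_zpow, ← map_mul, hrep, hqmkdef]
  have equiv : PresentedGroup (holderRels m n k l) ≃* Q := MonoidHom.toMulEquiv π θ' hcomp1 hcomp2
  -- transfer the center condition
  have hred : Subgroup.center (HolderGroup m n k l) = ⊥ ↔ Subgroup.center Q = ⊥ :=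
    center_eq_bot_iff_of_mulEquiv equiv
  rw [hred]
  -- characterize the center of Q
  have hnz : (n : ℤ) ≠ 0 := by exact_mod_cast hn.ne'
  have hQiff : Subgroup.center Q = ⊥ ↔
      ∀ g : Model m v⁻¹, (∀ h, h * g = g * h) → g ∈ Z := by
    constructor
    · intro hbot g hg
      have hgc : (qmk g) ∈ Subgroup.center Q := by
        rw [Subgroup.mem_center_iff]
        intro q
        obtain ⟨h, rfl⟩ := QuotientGroup.mk'_surjective Z q
        rw [← map_mul, ← map_mul, hg h]
      rw [hbot, Subgroup.mem_bot] at hgc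
      exact (QuotientGroup.eq_one_iff g).mp hgc
    · intro hcc
      rw [Subgroup.eq_bot_iff_forall]
      intro z hz
      obtain ⟨g, rfl⟩ := QuotientGroup.mk'_surjective Z z
      have hcom : ∀ h : Model m v⁻¹, h * g = g * h := by
        intro h
        have hmem : (h * g)⁻¹ * (g * h) ∈ Z := by
          apply QuotientGroup.eq.mp
          show ((h * g : Model m v⁻¹) : Q) = ((g * h : Model m v⁻¹) : Q)
          have := Subgroup.mem_center_iff.mp hz (qmk h)
          rw [hqmkdef, ← map_mul, ← map_mul] at this
          exact this
        have hi0 : ((h * g)⁻¹ * (g * h) : Model m v⁻¹).i = 0 := by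
          simp only [Model.mul_i, Model.inv_i]
          ring
        have := Model.eq_one_of_mem_zpowers hw hun hnz hmem hi0
        exact (inv_mul_eq_one.mp this)
      have := hcc g hcom
      exact (QuotientGroup.eq_one_iff g).mpr this
  rw [hQiff]
  -- arithmetic characterizations
  have hordv_dvd : orderOf v ∣ n := orderOf_dvd_of_pow_eq_one hvn
  have hIsIndex_iff : IsIndex m k n ↔ orderOf v = n := by
    constructor
    · rintro ⟨-, -, hmin⟩
      have hpos : 0 < orderOf v := orderOf_pos v
      have hvord : k ^ (orderOf v) ≡ 1 [MOD m] := by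
        have hp : (k : ZMod m) ^ (orderOf v) = 1 := by
          have := pow_orderOf_eq_one v
          have := congrArg (Units.val) this
          rwa [Units.val_pow_eq_pow_val, hv, Units.val_one] at this
        have : ((k ^ orderOf v : ℕ) : ZMod m) = ((1 : ℕ) : ZMod m) := by push_cast; exact hp
        exact (ZMod.natCast_eq_natCast_iff _ _ _).mp this
      exact Nat.le_antisymm (Nat.le_of_dvd hn hordv_dvd) (hmin _ hpos hvord)
    · intro hord
      refine ⟨hn, h1, fun d hd hkd => ?_⟩
      have hkd' : (k : ZMod m) ^ d = 1 := by
        have := (ZMod.natCast_eq_natCast_iff (k ^ d) 1 m).mpr hkd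
        push_cast at this
        exact this
      have hvd : v ^ d = 1 :=
        Units.ext (by rw [Units.val_pow_eq_pow_val, hv, Units.val_one]; exact hkd')
      have := orderOf_dvd_of_pow_eq_one hvd
      rw [hord] at this
      exact Nat.le_of_dvd hd this
  have hgcd_iff : Nat.gcd m (k - 1) = 1 ↔ IsUnit ((k : ZMod m) - 1) := by
    have hcast : ((k - 1 : ℕ) : ZMod m) = (k : ZMod m) - 1 := by
      rw [Nat.cast_sub hk, Nat.cast_one]
    rw [← hcast, ZMod.isUnit_iff_coprime]
    constructor
    · intro hg
      exact Nat.coprime_comm.mp hg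
    · intro hg
      exact Nat.coprime_comm.mp hg
  have hunit_iff : IsUnit ((k : ZMod m) - 1) ↔
      ∀ x : ZMod m, ((k : ZMod m) - 1) * x = 0 → x = 0 := by
    constructor
    · intro hu x hx
      exact (hu.mul_right_eq_zero).mp hx
    · intro hinj
      have hInj : Function.Injective (fun x : ZMod m => ((k : ZMod m) - 1) * x) := by
        intro a b hab
        have hz : ((k : ZMod m) - 1) * (a - b) = 0 := by
          rw [mul_sub]
          simpa [sub_eq_zero] using hab
        have := hinj _ hz
        rwa [sub_eq_zero] at this
      obtain ⟨y, hy⟩ := (Finite.injective_iff_surjective.mp hInj) 1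
      exact IsUnit.of_mul_eq_one y hy
  have hml : Nat.gcd m (k - 1) = 1 → ((l : ZMod m) = 0) := by
    intro hg
    have hco : Nat.Coprime m (k - 1) := hg
    have hdvd : m ∣ l * (k - 1) := (Nat.modEq_zero_iff_dvd).mp h2
    have := hco.dvd_of_dvd_mul_right hdvd
    exact (ZMod.natCast_eq_zero_iff _ _).mpr this
  -- the final equivalence
  constructor
  · intro hCC
    constructor
    · rw [hgcd_iff, hunit_iff]
      intro x hx
      have hvx : v • x = x := by
        rw [Units.smul_def, hv, smul_eq_mul]
        linear_combination hx
      have hux : (v⁻¹ : (ZMod m)ˣ) • x = x := by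
        conv_lhs => rw [← hvx]
        rw [inv_smul_smul]
      have hcomm : ∀ h : Model m v⁻¹, h * (⟨x, 0⟩ : Model m v⁻¹) = ⟨x, 0⟩ * h := by
        intro h
        ext
        · show h.x + (v⁻¹ : (ZMod m)ˣ) ^ h.i • x = x + (v⁻¹ : (ZMod m)ˣ) ^ (0 : ℤ) • h.x
          rw [Model.fixed_zpow hux, zpow_zero, one_smul, add_comm]
        · show h.i + 0 = 0 + h.i
          ring
      obtain ⟨t, hx', hi'⟩ := (Model.mem_zpowers_c hw hun).mp (hCC _ hcomm)
      have ht : t = 0 := by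
        rcases mul_eq_zero.mp hi'.symm with h | h
        · exact h
        · exact absurd h hnz
      rw [ht, zero_smul] at hx'
      exact hx'
    · rw [hIsIndex_iff]
      have hud : (v⁻¹ : (ZMod m)ˣ) ^ ((orderOf v : ℤ)) = 1 := by
        rw [zpow_natCast, inv_pow, pow_orderOf_eq_one, inv_one]
      have hcomm : ∀ h : Model m v⁻¹,
          h * (⟨0, (orderOf v : ℤ)⟩ : Model m v⁻¹) = ⟨0, (orderOf v : ℤ)⟩ * h := by
        intro h
        ext
        · show h.x + (v⁻¹ : (ZMod m)ˣ) ^ h.i • (0 : ZMod m) =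
            (0 : ZMod m) + (v⁻¹ : (ZMod m)ˣ) ^ (orderOf v : ℤ) • h.x
          rw [smul_zero, hud, one_smul, add_zero, zero_add]
        · show h.i + (orderOf v : ℤ) = (orderOf v : ℤ) + h.i
          ring
      obtain ⟨t, hx', hi'⟩ := (Model.mem_zpowers_c hw hun).mp (hCC _ hcomm)
      have hi'' : (orderOf v : ℤ) = t * (n : ℤ) := hi'
      have hpos : 0 < orderOf v := orderOf_pos v
      have hle : orderOf v ≤ n := Nat.le_of_dvd hn hordv_dvd
      have hnzp : (0 : ℤ) < (n : ℤ) := by exact_mod_cast hn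
      have hdp : (0 : ℤ) < (orderOf v : ℤ) := by exact_mod_cast hpos
      have ht : 0 < t := by
        by_contra hle'
        push_neg at hle'
        have : t * (n : ℤ) ≤ 0 := mul_nonpos_of_nonpos_of_nonneg hle' hnzp.le
        rw [← hi''] at this
        omega
      have hge : (n : ℤ) ≤ t * (n : ℤ) := le_mul_of_one_le_left hnzp.le ht
      have : (n : ℤ) ≤ (orderOf v : ℤ) := by rw [hi'']; exact hge
      have : n ≤ orderOf v := by exact_mod_cast this
      omega
  · rintro ⟨hgcd, hIdx⟩ g hcomm
    have hxg : g.x = 0 := by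
      have h01 := hcomm ⟨0, 1⟩
      have hx1 : (0 : ZMod m) + (v⁻¹ : (ZMod m)ˣ) ^ (1 : ℤ) • g.x =
          g.x + (v⁻¹ : (ZMod m)ˣ) ^ g.i • (0 : ZMod m) := congrArg Model.x h01
      have hux : (v⁻¹ : (ZMod m)ˣ) • g.x = g.x := by simpa using hx1
      have hvx : g.x = v • g.x := by
        conv_rhs => rw [← hux]
        rw [smul_inv_smul]
      have hkz : ((k : ZMod m) - 1) * g.x = 0 := by
        rw [Units.smul_def, hv, smul_eq_mul] at hvx
        linear_combination -hvx
      exact (hgcd_iff.mp hgcd).mul_right_eq_zero.mp hkz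
    have hdvd : (n : ℤ) ∣ g.i := by
      have h10 := hcomm ⟨1, 0⟩
      have hx1 : (1 : ZMod m) + (v⁻¹ : (ZMod m)ˣ) ^ (0 : ℤ) • g.x =
          g.x + (v⁻¹ : (ZMod m)ˣ) ^ g.i • (1 : ZMod m) := congrArg Model.x h10
      rw [zpow_zero, one_smul, Units.smul_def, smul_eq_mul, mul_one] at hx1
      have hval : (((v⁻¹ : (ZMod m)ˣ) ^ g.i : (ZMod m)ˣ) : ZMod m) = 1 := by
        linear_combination -hx1
      have hunit1 : (v⁻¹ : (ZMod m)ˣ) ^ g.i = 1 := Units.ext (by rw [Units.val_one]; exact hval)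
      have hv1 : v ^ g.i = 1 := by rwa [inv_zpow, inv_eq_one] at hunit1
      have := orderOf_dvd_iff_zpow_eq_one.mpr hv1
      rwa [hIsIndex_iff.mp hIdx] at this
    obtain ⟨t, ht⟩ := hdvd
    refine (Model.mem_zpowers_c hw hun).mpr ⟨t, ?_, ?_⟩
    · rw [hxg, hml hgcd, neg_zero, smul_zero]
    · rw [ht]; ring
end

section
/- Every finite metacyclic group with trivial centre admits a presentation ⟨a, b ; a^m = 1, b^n = 1, b⁻¹ab = a^k⟩ for some positive integers m, n, k with gcd(m, k-1) = 1 and n equal to the multiplicative order of k modulo m. -/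
/-- A group is metacyclic if it has a cyclic normal subgroup with cyclic
quotient. -/
def IsMetacyclic (G : Type*) [Group G] : Prop :=
  ∃ N : Subgroup G, IsCyclic N ∧
    ∃ hN : N.Normal,
      letI : Group (G ⧸ N) := @QuotientGroup.Quotient.group G _ N hN
      IsCyclic (G ⧸ N)

section helpers
variable {H : Type*} [Group H]

lemma conj_pow_pow' {x y : H} {kk : ℕ}
    (h : y⁻¹ * x * y = x ^ kk) (s t : ℕ) :
    (y ^ s)⁻¹ * x ^ t * y ^ s = x ^ (t * kk ^ s) := by
  induction s with
  | zero => simp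
  | succ s ih =>
      have hxt : y⁻¹ * x ^ (t * kk ^ s) * y = x ^ (t * kk ^ (s+1)) := by
        have h2 : y⁻¹ * x ^ (t * kk ^ s) * y = (y⁻¹ * x * y) ^ (t * kk ^ s) := by
          simpa using (conj_pow (a := y⁻¹) (b := x) (i := t * kk ^ s)).symm
        rw [h2, h, ← pow_mul]; ring_nf
      calc (y ^ (s+1))⁻¹ * x ^ t * y ^ (s+1)
          = y⁻¹ * ((y ^ s)⁻¹ * x ^ t * y ^ s) * y := by group
        _ = _ := by rw [ih, hxt]

lemma mem_center_of_commute {a b z : H}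
    (hgen : Subgroup.closure ({a, b} : Set H) = ⊤)
    (ha : Commute z a) (hb : Commute z b) : z ∈ Subgroup.center H := by
  rw [Subgroup.mem_center_iff]
  intro g
  have hg : g ∈ Subgroup.closure ({a, b} : Set H) := by rw [hgen]; trivial
  induction hg using Subgroup.closure_induction with
  | mem x hx =>
      rcases hx with rfl | rfl
      · exact ha.symm.eq
      · exact hb.symm.eq
  | one => simp
  | mul x y _ _ hx hy => rw [mul_assoc, hy, ← mul_assoc, hx, mul_assoc]
  | inv x _ hx =>
      have : Commute z x := hx.symm
      exact this.inv_right.symm.eq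

end helpers

namespace McAux
variable {m n k : ℕ}

local notation "P" => PresentedGroup (mcRels m n k)
local notation "A" => (PresentedGroup.of true : P)
local notation "B" => (PresentedGroup.of false : P)

lemma mk_rel {r : FreeGroup Bool} (h : r ∈ mcRels m n k) :
    PresentedGroup.mk (mcRels m n k) r = 1 :=
  (QuotientGroup.eq_one_iff r).mpr (Subgroup.subset_normalClosure h)

lemma relA : A ^ m = 1 := by
  have := mk_rel (m := m) (n := n) (k := k) (Set.mem_insert _ _)
  simpa [map_pow, PresentedGroup.of] using this

lemma relB : B ^ n = 1 := by
  have := mk_rel (m := m) (n := n) (k := k)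
    (Set.mem_insert_of_mem _ (Set.mem_insert _ _))
  simpa [map_pow, PresentedGroup.of] using this

lemma relC : B⁻¹ * A * B = A ^ k := by
  have := mk_rel (m := m) (n := n) (k := k)
    (Set.mem_insert_of_mem _ (Set.mem_insert_of_mem _ rfl))
  simp only [map_mul, map_inv, map_pow] at this
  have h2 := mul_eq_one_iff_eq_inv.mp this
  simpa [PresentedGroup.of] using h2

lemma invB (hn : 0 < n) (s : ℕ) : (B ^ s)⁻¹ = B ^ (s * (n-1)) := by
  symm
  apply eq_inv_of_mul_eq_one_left
  rw [← pow_add]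
  have h : s * (n-1) + s = n * s := by
    cases n with
    | zero => omega
    | succ n => simp only [Nat.add_sub_cancel]; ring
  rw [h, pow_mul, relB, one_pow]

lemma invA (hm : 0 < m) (t : ℕ) : (A ^ t)⁻¹ = A ^ (t * (m-1)) := by
  symm
  apply eq_inv_of_mul_eq_one_left
  rw [← pow_add]
  have h : t * (m-1) + t = m * t := by
    cases m with
    | zero => omega
    | succ m => simp only [Nat.add_sub_cancel]; ring
  rw [h, pow_mul, relA, one_pow]

lemma swap (hn : 0 < n) (s t : ℕ) :
    B ^ s * A ^ t = A ^ (t * k ^ (s * (n-1))) * B ^ s := by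
  have h1 := conj_pow_pow' (relC (m := m) (n := n) (k := k)) (s * (n-1)) t
  have h2 : (B ^ (s * (n-1)))⁻¹ = B ^ s := by
    rw [← invB hn s, inv_inv]
  rw [h2, ← invB hn s] at h1
  calc B ^ s * A ^ t = (B ^ s * A ^ t * (B ^ s)⁻¹) * B ^ s := by group
    _ = _ := by rw [h1]

def nfSub (hm : 0 < m) (hn : 0 < n) : Subgroup P where
  carrier := {z | ∃ i j : ℕ, z = A ^ i * B ^ j}
  one_mem' := ⟨0, 0, by simp⟩
  mul_mem' := by
    rintro x y ⟨i, j, rfl⟩ ⟨i', j', rfl⟩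
    refine ⟨i + i' * k ^ (j * (n-1)), j + j', ?_⟩
    calc A ^ i * B ^ j * (A ^ i' * B ^ j')
        = A ^ i * (B ^ j * A ^ i') * B ^ j' := by group
      _ = A ^ i * (A ^ (i' * k ^ (j * (n-1))) * B ^ j) * B ^ j' := by rw [swap hn]
      _ = _ := by rw [pow_add, pow_add]; group
  inv_mem' := by
    rintro x ⟨i, j, rfl⟩
    refine ⟨i * (m-1) * k ^ (j * (n-1) * (n-1)), j * (n-1), ?_⟩
    rw [mul_inv_rev, invA hm, invB hn, swap hn]

lemma nf (hm : 0 < m) (hn : 0 < n) (z : P) :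
    ∃ i j : ℕ, i < m ∧ j < n ∧ z = A ^ i * B ^ j := by
  have hz : z ∈ nfSub hm hn := by
    apply PresentedGroup.generated_by
    intro b
    cases b
    · exact ⟨0, 1, by simp⟩
    · exact ⟨1, 0, by simp⟩
  obtain ⟨i, j, rfl⟩ := hz
  exact ⟨i % m, j % n, Nat.mod_lt _ hm, Nat.mod_lt _ hn,
    by rw [← pow_eq_pow_mod i relA, ← pow_eq_pow_mod j relB]⟩

lemma card_le (hm : 0 < m) (hn : 0 < n) :
    Nat.card P ≤ m * n ∧ Finite P := by
  set g : Fin m × Fin n → P := fun p => A ^ (p.1 : ℕ) * B ^ (p.2 : ℕ) with hg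
  have hsurj : Function.Surjective g := by
    intro z
    obtain ⟨i, j, hi, hj, rfl⟩ := nf hm hn z
    exact ⟨(⟨i, hi⟩, ⟨j, hj⟩), rfl⟩
  have hfin : Finite P := Finite.of_surjective g hsurj
  refine ⟨?_, hfin⟩
  simpa using Nat.card_le_card_of_surjective g hsurj

end McAux


/-- every finite metacyclic group with trivial centre can be
presented as `⟨a, b ; a^m = 1, b^n = 1, b⁻¹ab = a^k⟩` with `gcd(m, k-1) = 1`
and `n = ind_m(k)`. -/
theorem stmt_3 (G : Type*) [Group G] [Finite G]
    (hmc : IsMetacyclic G) (hz : Subgroup.center G = ⊥) :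
    ∃ m n k : ℕ, 0 < m ∧ 0 < n ∧ 0 < k ∧ Nat.gcd m (k - 1) = 1 ∧
      IsIndex m k n ∧ Nonempty (G ≃* McGroup m n k) := by
  obtain ⟨N, hNcyc, hN, hQcyc⟩ := hmc
  haveI := hN
  haveI hQC : IsCyclic (G ⧸ N) := hQcyc
  obtain ⟨a₀, ha₀⟩ := hNcyc.exists_generator
  set a : G := (a₀ : G) with ha_def
  have haN : a ∈ N := a₀.2
  have hNmem : ∀ x ∈ N, ∃ i : ℤ, a ^ i = x := by
    intro x hx
    obtain ⟨i, hi⟩ := ha₀ ⟨x, hx⟩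
    refine ⟨i, ?_⟩
    have := congrArg (Subtype.val) hi
    simpa using this
  set m := orderOf a with hm_def
  have hm : 0 < m := orderOf_pos a
  have hNz : N = Subgroup.zpowers a := by
    refine le_antisymm ?_ (Subgroup.zpowers_le.mpr haN)
    intro x hx
    obtain ⟨i, hi⟩ := hNmem x hx
    exact Subgroup.mem_zpowers_iff.mpr ⟨i, hi⟩
  have hcardN : Nat.card N = m := by rw [hNz]; exact Nat.card_zpowers a
  set n := Nat.card (G ⧸ N) with hn_def
  have hn : 0 < n := Nat.card_pos
  obtain ⟨q, hq⟩ := hQC.exists_generator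
  obtain ⟨b, rfl⟩ := QuotientGroup.mk_surjective q
  have hoq : orderOf ((b : G) : G ⧸ N) = n := by
    rw [orderOf_eq_card_of_forall_mem_zpowers hq]
  -- generation
  have hgen : Subgroup.closure ({a, b} : Set G) = ⊤ := by
    rw [eq_top_iff]
    rintro g -
    obtain ⟨j, hj⟩ := hq (↑g)
    have h1 : (((b ^ j)⁻¹ * g : G) : G ⧸ N) = 1 := by
      have : ((b ^ j : G) : G ⧸ N) = ((g : G) : G ⧸ N) := by
        rw [← hj]; simp
      simp [this]
    have h1mem : ((b ^ j)⁻¹ * g : G) ∈ N := (QuotientGroup.eq_one_iff _).mp h1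
    obtain ⟨i, hi⟩ := hNmem _ h1mem
    have hg : g = b ^ j * a ^ i := by rw [hi]; group
    rw [hg]
    exact mul_mem
      (Subgroup.zpow_mem _ (Subgroup.subset_closure (by simp)) j)
      (Subgroup.zpow_mem _ (Subgroup.subset_closure (by simp)) i)
  -- the exponent k
  have hconjN : b⁻¹ * a * b ∈ N := by simpa using hN.conj_mem a haN b⁻¹
  obtain ⟨i₀, hi₀⟩ := hNmem _ hconjN
  set k₁ := (i₀ % (m : ℤ)).toNat with hk₁_def
  have hk₁ : a ^ (k₁ : ℕ) = b⁻¹ * a * b := by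
    rw [← hi₀, ← zpow_natCast, hk₁_def,
      Int.toNat_of_nonneg (Int.emod_nonneg _ (by exact_mod_cast hm.ne'))]
    exact zpow_mod_orderOf a i₀
  set k := if k₁ = 0 then m else k₁ with hk_def
  have hk : 0 < k := by rw [hk_def]; split_ifs <;> omega
  have hconj : b⁻¹ * a * b = a ^ k := by
    rw [hk_def]; split_ifs with h
    · rw [← hk₁, h, pow_zero, hm_def, pow_orderOf_eq_one]
    · exact hk₁.symm
  -- centrality helper
  have hcen : ∀ z : G, Commute z a → Commute z b → z = 1 := by
    intro z h1 h2
    have := mem_center_of_commute hgen h1 h2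
    rw [hz] at this
    exact Subgroup.mem_bot.mp this
  -- b ^ n = 1 and orderOf b = n
  have hbn : b ^ n = 1 := by
    have hmem : b ^ n ∈ N := by
      rw [← QuotientGroup.eq_one_iff]
      have : ((b ^ n : G) : G ⧸ N) = ((b : G) : G ⧸ N) ^ n := by simp
      rw [this, hn_def]
      exact pow_card_eq_one'
    obtain ⟨t, ht⟩ := hNmem _ hmem
    have hcom_a : Commute (b ^ n) a := by
      rw [← ht]; exact (Commute.refl a).zpow_left t
    exact hcen _ hcom_a ((Commute.refl b).pow_left n)
  have hobn : orderOf b = n :=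
    Nat.dvd_antisymm (orderOf_dvd_of_pow_eq_one hbn)
      (hoq ▸ orderOf_map_dvd (QuotientGroup.mk' N) b)
  have hconj_it : ∀ s t : ℕ, (b ^ s)⁻¹ * a ^ t * b ^ s = a ^ (t * k ^ s) :=
    fun s t => conj_pow_pow' hconj s t
  -- IsIndex
  have hkn : k ^ n ≡ 1 [MOD m] := by
    have h1 : a ^ (1 * k ^ n) = a ^ 1 := by
      rw [← hconj_it n 1, hbn]; simp
    have h2 := pow_eq_pow_iff_modEq.mp h1
    rw [← hm_def] at h2
    simpa using h2
  have hmin : ∀ d : ℕ, 0 < d → k ^ d ≡ 1 [MOD m] → n ≤ d := by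
    intro d hd hkd
    have h1 : a ^ (1 * k ^ d) = a ^ 1 := by
      apply pow_eq_pow_iff_modEq.mpr
      rw [← hm_def]
      simpa using hkd
    have h2 : (b ^ d)⁻¹ * a * b ^ d = a := by
      have := hconj_it d 1
      rw [pow_one] at this
      rw [this, h1, pow_one]
    have hcom_a : Commute (b ^ d) a := by
      have : a * b ^ d = b ^ d * a := by
        calc a * b ^ d = b ^ d * ((b ^ d)⁻¹ * a * b ^ d) := by group
          _ = b ^ d * a := by rw [h2]
      exact this.symm
    have hbd1 : b ^ d = 1 := hcen _ hcom_a ((Commute.refl b).pow_left d)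
    exact Nat.le_of_dvd hd (hobn ▸ orderOf_dvd_of_pow_eq_one hbd1)
  -- gcd m (k-1) = 1
  have hd1 : Nat.gcd m (k - 1) = 1 := by
    set d := Nat.gcd m (k - 1) with hd_def
    have hdm : d ∣ m := Nat.gcd_dvd_left _ _
    have hdk : d ∣ (k - 1) := Nat.gcd_dvd_right _ _
    have hdpos : 0 < d := Nat.gcd_pos_of_pos_left _ hm
    set z := a ^ (m / d) with hz_def
    have hza : Commute z a := (Commute.refl a).pow_left _
    have hmdvd : m ∣ m / d * (k - 1) := by
      obtain ⟨c, hc⟩ := hdk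
      refine ⟨c, ?_⟩
      rw [hc, ← mul_assoc, Nat.div_mul_cancel hdm]
    have hmodeq : m / d * k ≡ m / d [MOD m] := by
      have h0 : m / d * (k - 1) ≡ 0 [MOD m] :=
        (Nat.modEq_zero_iff_dvd).mpr hmdvd
      have h1 := h0.add_right (m / d)
      have h2 : m / d * (k - 1) + m / d = m / d * k := by
        have : k - 1 + 1 = k := Nat.sub_add_cancel hk
        calc m / d * (k - 1) + m / d = m / d * (k - 1 + 1) := by ring
          _ = m / d * k := by rw [this]
      rw [h2] at h1
      simpa using h1
    have hzb : Commute z b := by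
      have h1 := hconj_it 1 (m / d)
      rw [pow_one] at h1
      have h2 : a ^ (m / d * k ^ 1) = a ^ (m / d) := by
        apply pow_eq_pow_iff_modEq.mpr
        rw [← hm_def, pow_one]
        exact hmodeq
      rw [h2] at h1
      have : z * b = b * z := by
        calc z * b = b * (b⁻¹ * z * b) := by group
          _ = b * z := by rw [hz_def, h1]
      exact this
    have hz1 : z = 1 := hcen z hza hzb
    have hdvd : m ∣ m / d := hm_def ▸ orderOf_dvd_of_pow_eq_one hz1
    have h3 : 0 < m / d := Nat.div_pos (Nat.le_of_dvd hm hdm) hdpos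
    have h6 : m / d = m := le_antisymm (Nat.div_le_self _ _) (Nat.le_of_dvd h3 hdvd)
    have h7 : d * (m / d) = m := Nat.mul_div_cancel' hdm
    rw [h6] at h7
    have : d * m = 1 * m := by rw [h7, one_mul]
    exact Nat.eq_of_mul_eq_mul_right hm this
  -- cardinality of G
  have hcardG : Nat.card G = n * m := by
    rw [Subgroup.card_eq_card_quotient_mul_card_subgroup N, hcardN]
  -- the homomorphism
  refine ⟨m, n, k, hm, hn, hk, hd1, ⟨hn, hkn, hmin⟩, ?_⟩
  set f : Bool → G := fun x => if x then a else b with hf_def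
  have hfa : f true = a := rfl
  have hfb : f false = b := rfl
  have hrels : ∀ r ∈ mcRels m n k, FreeGroup.lift f r = 1 := by
    intro r hr
    rcases hr with rfl | rfl | rfl
    · rw [map_pow, FreeGroup.lift_apply_of, hfa, hm_def, pow_orderOf_eq_one]
    · rw [map_pow, FreeGroup.lift_apply_of, hfb, hbn]
    · simp only [map_mul, map_inv, map_pow, FreeGroup.lift_apply_of, hfa, hfb]
      rw [hconj]; group
  set φ := PresentedGroup.toGroup hrels with hφ_def
  have hsurj : Function.Surjective φ := by
    rw [← MonoidHom.range_eq_top]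
    rw [eq_top_iff, ← hgen, Subgroup.closure_le]
    rintro x (rfl | rfl)
    · exact ⟨PresentedGroup.of true, PresentedGroup.toGroup.of hrels⟩
    · exact ⟨PresentedGroup.of false, PresentedGroup.toGroup.of hrels⟩
  obtain ⟨hcardle, hfin⟩ := McAux.card_le (m := m) (n := n) (k := k) hm hn
  haveI := hfin
  have hcards : Nat.card (PresentedGroup (mcRels m n k)) = Nat.card G := by
    refine le_antisymm ?_ (Nat.card_le_card_of_surjective φ hsurj)
    rw [hcardG, mul_comm]
    exact hcardle
  have hbij : Function.Bijective φ :=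
    (Nat.bijective_iff_surjective_and_card φ).mpr ⟨hsurj, hcards⟩
  exact ⟨(MulEquiv.ofBijective φ hbij).symm⟩
end

section
/- Let G be a finite metacyclic group presented by ⟨a, b ; a^m = 1, b^n = a^l, a^b = a^k⟩ with n = ind_m(k), and let R = {k^j - 1 mod m : j ∈ ℤ_n} ⊆ ℤ_m and L = {-(k^j - 1) mod m : j ∈ ℤ_n} ⊆ ℤ_m. Then the following are equivalent: (a) G has trivial centre; (b) R contains an element invertible in ℤ_m; (c) L contains an element invertible in ℤ_m. -/
namespace Stmt4

/-- Model of the Hölder group: pairs `⟨x, j⟩` representing `b^j * a^x`. -/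
@[ext]
structure Mdl (m n k l : ℕ) : Type where
  a : ZMod m
  b : ZMod n

namespace Mdl

variable {m n k l : ℕ}

/-- Carry cocycle. -/
def carry (n : ℕ) [NeZero n] (x y : ZMod n) : ℕ := (x.val + y.val) / n

lemma val_add_eq [NeZero n] (x y : ZMod n) :
    x.val + y.val = (x + y).val + n * carry n x y := by
  rw [ZMod.val_add, carry]
  exact (Nat.mod_add_div _ n).symm

lemma carry_zero_left [NeZero n] (x : ZMod n) : carry n 0 x = 0 := by
  simp [carry, Nat.div_eq_of_lt (ZMod.val_lt x)]

lemma carry_zero_right [NeZero n] (x : ZMod n) : carry n x 0 = 0 := by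
  simp [carry, Nat.div_eq_of_lt (ZMod.val_lt x)]

lemma carry_assoc [NeZero n] (x y z : ZMod n) :
    carry n x y + carry n (x + y) z = carry n y z + carry n x (y + z) := by
  have h1 := val_add_eq x y
  have h2 := val_add_eq (x + y) z
  have h3 := val_add_eq y z
  have h4 := val_add_eq x (y + z)
  have hn : 0 < n := Nat.pos_of_ne_zero (NeZero.ne n)
  have ha : (x + y + z).val = (x + (y + z)).val := by rw [add_assoc]
  have key : n * carry n x y + n * carry n (x + y) z
      = n * carry n y z + n * carry n x (y + z) := by omega
  rw [← Nat.mul_add, ← Nat.mul_add] at key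
  exact Nat.eq_of_mul_eq_mul_left hn key

instance [NeZero n] : Mul (Mdl m n k l) :=
  ⟨fun x y => ⟨(k : ZMod m) ^ y.b.val * x.a + y.a + l * carry n x.b y.b, x.b + y.b⟩⟩

instance : One (Mdl m n k l) := ⟨⟨0, 0⟩⟩

instance [NeZero n] : Inv (Mdl m n k l) :=
  ⟨fun x => ⟨-((k : ZMod m) ^ ((n - 1) * x.b.val) *
      (x.a + l * carry n (-x.b) x.b)), -x.b⟩⟩

lemma mul_def [NeZero n] (x y : Mdl m n k l) :
    x * y = ⟨(k : ZMod m) ^ y.b.val * x.a + y.a + l * carry n x.b y.b, x.b + y.b⟩ := rfl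

lemma one_def : (1 : Mdl m n k l) = ⟨0, 0⟩ := rfl


section
variable [NeZero n] [Fact ((k : ZMod m) ^ n = 1)] [Fact ((l : ZMod m) * k = l)]

lemma kpow_n : (k : ZMod m) ^ n = 1 := Fact.out

lemma l_mul_kpow (t : ℕ) : (l : ZMod m) * (k : ZMod m) ^ t = l := by
  induction t with
  | zero => simp
  | succ t ih => rw [pow_succ, ← mul_assoc, ih, Fact.out (p := (l : ZMod m) * k = l)]

lemma kpow_val_add (x y : ZMod n) :
    (k : ZMod m) ^ (x + y).val = (k : ZMod m) ^ x.val * (k : ZMod m) ^ y.val := by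
  rw [← pow_add, val_add_eq x y, pow_add, pow_mul, kpow_n (m := m) (n := n), one_pow, mul_one]

instance group : Group (Mdl m n k l) where
  mul_assoc x y z := by
    ext
    · show (k : ZMod m) ^ z.b.val *
          ((k : ZMod m) ^ y.b.val * x.a + y.a + l * carry n x.b y.b) + z.a
          + l * carry n (x.b + y.b) z.b
        = (k : ZMod m) ^ (y.b + z.b).val * x.a
          + ((k : ZMod m) ^ z.b.val * y.a + z.a + l * carry n y.b z.b)
          + l * carry n x.b (y.b + z.b)
      rw [kpow_val_add]
      have hc := carry_assoc x.b y.b z.b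
      have hc' : ((carry n x.b y.b + carry n (x.b + y.b) z.b : ℕ) : ZMod m)
          = ((carry n y.b z.b + carry n x.b (y.b + z.b) : ℕ) : ZMod m) := by rw [hc]
      push_cast at hc'
      have hlk2 : (l : ZMod m) * (k : ZMod m) ^ z.b.val = l := l_mul_kpow _
      linear_combination ((carry n x.b y.b : ℕ) : ZMod m) * hlk2 + (l : ZMod m) * hc' 
    · show x.b + y.b + z.b = x.b + (y.b + z.b)
      exact add_assoc _ _ _
  one_mul x := by
    ext
    · show (k : ZMod m) ^ x.b.val * 0 + x.a + l * carry n 0 x.b = x.a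
      simp [carry_zero_left]
    · show (0 : ZMod n) + x.b = x.b
      exact zero_add _
  mul_one x := by
    ext
    · show (k : ZMod m) ^ (0 : ZMod n).val * x.a + 0 + l * carry n x.b 0 = x.a
      simp [carry_zero_right, ZMod.val_zero]
    · show x.b + 0 = x.b
      exact add_zero _
  inv_mul_cancel x := by
    ext
    · show (k : ZMod m) ^ x.b.val *
          (-((k : ZMod m) ^ ((n - 1) * x.b.val) * (x.a + l * carry n (-x.b) x.b)))
          + x.a + l * carry n (-x.b) x.b = 0
      have hn : 1 ≤ n := Nat.one_le_iff_ne_zero.mpr (NeZero.ne n)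
      have : (k : ZMod m) ^ x.b.val * (k : ZMod m) ^ ((n - 1) * x.b.val) = 1 := by
        rw [← pow_add]
        have : x.b.val + (n - 1) * x.b.val = n * x.b.val := by
          cases n with
          | zero => exact absurd rfl (NeZero.ne 0)
          | succ n => rw [Nat.add_sub_cancel, Nat.succ_mul, Nat.add_comm]
        rw [this, pow_mul, kpow_n (m := m) (n := n), one_pow]
      rw [mul_neg, ← mul_assoc, this]
      ring
    · show -x.b + x.b = 0
      exact neg_add_cancel _

end
end Mdl
end Stmt4


section PG

variable {m n k l : ℕ}

/-- `a` in the presented group. -/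
def aa : PresentedGroup (holderRels m n k l) := PresentedGroup.of true

/-- `b` in the presented group. -/
def bb : PresentedGroup (holderRels m n k l) := PresentedGroup.of false

lemma rel_mk {r : FreeGroup Bool} (hr : r ∈ holderRels m n k l) :
    PresentedGroup.mk (holderRels m n k l) r = 1 :=
  (QuotientGroup.eq_one_iff r).mpr (Subgroup.subset_normalClosure hr)

lemma rel1 : (aa : PresentedGroup (holderRels m n k l)) ^ m = 1 := by
  have := rel_mk (m := m) (n := n) (k := k) (l := l)
    (Set.mem_insert _ _)
  rwa [map_pow] at this

lemma rel2 : (bb : PresentedGroup (holderRels m n k l)) ^ n = aa ^ l := by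
  have := rel_mk (m := m) (n := n) (k := k) (l := l)
    (Set.mem_insert_of_mem _ (Set.mem_insert _ _))
  rw [map_mul, map_inv, map_pow, map_pow, mul_inv_eq_one] at this
  exact this

lemma rel3 : (aa : PresentedGroup (holderRels m n k l)) * bb = bb * aa ^ k := by
  have := rel_mk (m := m) (n := n) (k := k) (l := l)
    (Set.mem_insert_of_mem _ (Set.mem_insert_of_mem _ rfl))
  rw [map_mul, map_mul, map_mul, map_inv, map_inv, map_pow, mul_inv_eq_one] at this
  have h : (bb : PresentedGroup (holderRels m n k l))⁻¹ * aa * bb = aa ^ k := this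
  rw [← h]
  group

lemma apow_mod (x : ℕ) :
    (aa : PresentedGroup (holderRels m n k l)) ^ x = aa ^ (x % m) := by
  conv_lhs => rw [← Nat.div_add_mod x m]
  rw [pow_add, pow_mul, rel1, one_pow, one_mul]

lemma apow_congr {x y : ℕ} (h : x ≡ y [MOD m]) :
    (aa : PresentedGroup (holderRels m n k l)) ^ x = aa ^ y := by
  have h' : x % m = y % m := h
  rw [apow_mod, h', ← apow_mod]

lemma apow_b (x : ℕ) :
    (aa : PresentedGroup (holderRels m n k l)) ^ x * bb = bb * aa ^ (k * x) := by
  induction x with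
  | zero => simp
  | succ x ih =>
    have : (aa : PresentedGroup (holderRels m n k l)) ^ (x + 1) * bb
        = aa ^ x * (aa * bb) := by rw [pow_succ, mul_assoc]
    rw [this, rel3, ← mul_assoc, ih, mul_assoc, ← pow_add]
    ring_nf

lemma apow_bpow (t x : ℕ) :
    (aa : PresentedGroup (holderRels m n k l)) ^ x * bb ^ t = bb ^ t * aa ^ (k ^ t * x) := by
  induction t with
  | zero => simp
  | succ t ih =>
    rw [pow_succ, ← mul_assoc, ih, mul_assoc, apow_b, ← mul_assoc, ← pow_succ]
    have : k * (k ^ t * x) = k ^ (t + 1) * x := by ring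
    rw [this]

end PG

namespace Stmt4
namespace Mdl
variable {m n k l : ℕ}
section
variable [NeZero n] [Fact ((k : ZMod m) ^ n = 1)] [Fact ((l : ZMod m) * k = l)]

lemma mul_a (x y : ZMod m) :
    (⟨x, 0⟩ : Mdl m n k l) * ⟨y, 0⟩ = ⟨x + y, 0⟩ := by
  rw [mul_def]
  ext
  · show (k : ZMod m) ^ (0 : ZMod n).val * x + y + l * carry n 0 0 = x + y
    simp [carry_zero_left, ZMod.val_zero]
  · show (0 : ZMod n) + 0 = 0
    simp

lemma a_pow (x : ZMod m) (t : ℕ) :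
    (⟨x, 0⟩ : Mdl m n k l) ^ t = ⟨(t : ZMod m) * x, 0⟩ := by
  induction t with
  | zero => simp [one_def]
  | succ t ih =>
    rw [pow_succ, ih, mul_a]
    congr 1
    push_cast
    ring

lemma b_pow_lt [Fact (1 < n)] (t : ℕ) (ht : t < n) :
    (⟨0, 1⟩ : Mdl m n k l) ^ t = ⟨0, (t : ZMod n)⟩ := by
  induction t with
  | zero => simp [one_def]
  | succ t ih =>
    rw [pow_succ, ih (by omega), mul_def]
    have hc : carry n ((t : ZMod n)) 1 = 0 := by
      rw [carry, ZMod.val_one, ZMod.val_natCast]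
      have : t % n = t := Nat.mod_eq_of_lt (by omega)
      rw [this]
      exact Nat.div_eq_of_lt ht
    ext
    · show (k : ZMod m) ^ (1 : ZMod n).val * 0 + 0 + l * carry n (t : ZMod n) 1
        = (0 : ZMod m)
      rw [hc]
      simp
    · show ((t : ZMod n)) + 1 = ((t + 1 : ℕ) : ZMod n)
      push_cast
      ring

lemma b_pow_n [Fact (1 < n)] :
    (⟨0, 1⟩ : Mdl m n k l) ^ n = ⟨(l : ZMod m), 0⟩ := by
  have hn1 : 1 < n := Fact.out
  have e : (⟨0, 1⟩ : Mdl m n k l) ^ n = (⟨0, 1⟩ : Mdl m n k l) ^ (n - 1 + 1) :=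
    congrArg (fun t : ℕ => (⟨0, 1⟩ : Mdl m n k l) ^ t) (by omega)
  rw [e, pow_succ, b_pow_lt (n - 1) (by omega), mul_def]
  have hc : carry n ((n - 1 : ℕ) : ZMod n) 1 = 1 := by
    rw [carry, ZMod.val_one, ZMod.val_natCast, Nat.mod_eq_of_lt (by omega)]
    have : n - 1 + 1 = n := by omega
    rw [this, Nat.div_self (by omega)]
  ext
  · show (k : ZMod m) ^ (1 : ZMod n).val * 0 + 0 + l * carry n ((n - 1 : ℕ) : ZMod n) 1
      = (l : ZMod m)
    rw [hc]
    simp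
  · show ((n - 1 : ℕ) : ZMod n) + 1 = (0 : ZMod n)
    have : (((n - 1) + 1 : ℕ) : ZMod n) = ((n : ℕ) : ZMod n) := by congr 1; omega
    push_cast at this
    rw [this, ZMod.natCast_self]

end
end Mdl

section Maps

variable (m n k l : ℕ) [NeZero m] [NeZero n]
  [Fact ((k : ZMod m) ^ n = 1)] [Fact ((l : ZMod m) * k = l)]

/-- The map on generators. -/
def fmap : Bool → Mdl m n k l := fun x =>
  if x then ⟨1, 0⟩ else if 1 < n then ⟨0, 1⟩ else ⟨(l : ZMod m), 0⟩

lemma rels_check : ∀ r ∈ holderRels m n k l, FreeGroup.lift (fmap m n k l) r = 1 := by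
  intro r hr
  have hfa : FreeGroup.lift (fmap m n k l) (FreeGroup.of true) = ⟨1, 0⟩ := by
    rw [FreeGroup.lift_apply_of]; rfl
  have hknm : (k : ZMod m) ^ n = 1 := Fact.out
  rcases hr with rfl | rfl | rfl
  · rw [map_pow, hfa, Mdl.a_pow]
    show (⟨(m : ZMod m) * 1, 0⟩ : Mdl m n k l) = 1
    rw [Mdl.one_def, ZMod.natCast_self, zero_mul]
  · rw [map_mul, map_inv, map_pow, map_pow, hfa, mul_inv_eq_one, FreeGroup.lift_apply_of]
    rw [Mdl.a_pow]
    by_cases hn1 : 1 < n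
    · haveI : Fact (1 < n) := ⟨hn1⟩
      have : fmap m n k l false = ⟨0, 1⟩ := by simp [fmap, hn1]
      rw [this, Mdl.b_pow_n]
      congr 1
      rw [mul_one]
    · have hn' : n = 1 := by have := Nat.pos_of_ne_zero (NeZero.ne n); omega
      have : fmap m n k l false = ⟨(l : ZMod m), 0⟩ := by simp [fmap, hn1]
      rw [this, Mdl.a_pow]
      congr 1
      rw [hn']
      simp
  · rw [map_mul, map_mul, map_mul, map_inv, map_inv, map_pow, hfa, mul_inv_eq_one,
      FreeGroup.lift_apply_of]
    rw [mul_assoc, inv_mul_eq_iff_eq_mul]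
    -- goal : fa * fb = fb * fa ^ k  (up to assoc)
    by_cases hn1 : 1 < n
    · haveI : Fact (1 < n) := ⟨hn1⟩
      have hfb : fmap m n k l false = ⟨0, 1⟩ := by simp [fmap, hn1]
      rw [hfb, Mdl.a_pow, Mdl.mul_def, Mdl.mul_def]
      ext
      · show (k : ZMod m) ^ (1 : ZMod n).val * 1 + 0 + l * Mdl.carry n 0 1
          = (k : ZMod m) ^ (0 : ZMod n).val * 0 + (k : ZMod m) * 1
            + l * Mdl.carry n 1 0
        rw [Mdl.carry_zero_left, Mdl.carry_zero_right, ZMod.val_one, ZMod.val_zero]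
        simp
      · show (0 : ZMod n) + 1 = 1 + 0
        simp
    · have hn' : n = 1 := by have := Nat.pos_of_ne_zero (NeZero.ne n); omega
      have hfb : fmap m n k l false = ⟨(l : ZMod m), 0⟩ := by simp [fmap, hn1]
      have hk1 : (k : ZMod m) = 1 := by rw [hn', pow_one] at hknm; exact hknm
      rw [hfb, Mdl.a_pow, Mdl.mul_a, Mdl.mul_a]
      rw [hk1]
      congr 1
      ring

/-- The homomorphism from the presented group to the model. -/
def phi : PresentedGroup (holderRels m n k l) →* Mdl m n k l :=
  PresentedGroup.toGroup (rels_check m n k l)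

lemma phi_aa : phi m n k l aa = ⟨1, 0⟩ := by
  rw [aa, phi, PresentedGroup.toGroup.of]; rfl

lemma phi_bb_of_lt (hn1 : 1 < n) : phi m n k l bb = ⟨0, 1⟩ := by
  rw [bb, phi, PresentedGroup.toGroup.of]; simp [fmap, hn1]

lemma phi_bb_of_one (hn1 : n = 1) : phi m n k l bb = ⟨(l : ZMod m), 0⟩ := by
  rw [bb, phi, PresentedGroup.toGroup.of]; simp [fmap, hn1]

/-- The homomorphism from the model back to the presented group. -/
def psi : Mdl m n k l →* PresentedGroup (holderRels m n k l) :=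
  MonoidHom.mk' (fun x => bb ^ x.b.val * aa ^ x.a.val) (by
    intro u v
    show bb ^ ((u.b + v.b).val) *
        aa ^ (((k : ZMod m) ^ v.b.val * u.a + v.a + l * Mdl.carry n u.b v.b).val)
      = bb ^ u.b.val * aa ^ u.a.val * (bb ^ v.b.val * aa ^ v.a.val)
    have hval : (((k : ZMod m) ^ v.b.val * u.a + v.a + l * Mdl.carry n u.b v.b).val)
        = (k ^ v.b.val * u.a.val + v.a.val + l * Mdl.carry n u.b v.b) % m := by
      have hcast : ((k ^ v.b.val * u.a.val + v.a.val + l * Mdl.carry n u.b v.b : ℕ) :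
          ZMod m) = (k : ZMod m) ^ v.b.val * u.a + v.a + l * Mdl.carry n u.b v.b := by
        push_cast [ZMod.natCast_val, ZMod.cast_id]
        ring
      rw [← hcast, ZMod.val_natCast]
    rw [hval, ← apow_mod]
    -- RHS rearrangement
    have step1 : (bb : PresentedGroup (holderRels m n k l)) ^ u.b.val * aa ^ u.a.val
          * (bb ^ v.b.val * aa ^ v.a.val)
        = bb ^ u.b.val * (aa ^ u.a.val * bb ^ v.b.val) * aa ^ v.a.val := by group
    have rhs : (bb : PresentedGroup (holderRels m n k l)) ^ u.b.val * aa ^ u.a.val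
          * (bb ^ v.b.val * aa ^ v.a.val)
        = bb ^ ((u.b + v.b).val)
            * aa ^ (k ^ v.b.val * u.a.val + v.a.val + l * Mdl.carry n u.b v.b) := by
      rw [step1, apow_bpow, ← mul_assoc, ← pow_add, mul_assoc, ← pow_add]
      rw [Mdl.val_add_eq u.b v.b, pow_add, pow_mul, rel2, ← pow_mul, mul_assoc, ← pow_add]
      have he : l * Stmt4.Mdl.carry n u.b v.b + (k ^ v.b.val * u.a.val + v.a.val)
          = k ^ v.b.val * u.a.val + v.a.val + l * Stmt4.Mdl.carry n u.b v.b := by omega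
      rw [he]
    rw [rhs])

lemma psi_phi (g : PresentedGroup (holderRels m n k l)) :
    psi m n k l (phi m n k l g) = g := by
  have h : (psi m n k l).comp (phi m n k l) = MonoidHom.id _ := by
    apply PresentedGroup.ext
    intro x
    cases x
    · -- false : b
      show psi m n k l (phi m n k l bb) = bb
      by_cases hn1 : 1 < n
      · rw [phi_bb_of_lt m n k l hn1]
        show bb ^ (1 : ZMod n).val * aa ^ (0 : ZMod m).val = bb
        haveI : Fact (1 < n) := ⟨hn1⟩
        rw [ZMod.val_one, ZMod.val_zero, pow_one, pow_zero, mul_one]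
      · have hn' : n = 1 := by have := Nat.pos_of_ne_zero (NeZero.ne n); omega
        rw [phi_bb_of_one m n k l hn']
        show bb ^ (0 : ZMod n).val * aa ^ ((l : ZMod m)).val = bb
        rw [ZMod.val_zero, pow_zero, one_mul, ZMod.val_natCast, ← apow_mod,
          ← rel2 (n := n), hn', pow_one]
    · -- true : a
      show psi m n k l (phi m n k l aa) = aa
      rw [phi_aa]
      show bb ^ (0 : ZMod n).val * aa ^ ((1 : ZMod m)).val = aa
      have : ((1 : ZMod m)).val = 1 % m := by
        rw [show (1 : ZMod m) = ((1 : ℕ) : ZMod m) by norm_cast, ZMod.val_natCast]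
      rw [ZMod.val_zero, pow_zero, one_mul, this, ← apow_mod, pow_one]
  exact DFunLike.congr_fun h g

end Maps
end Stmt4

namespace Stmt4

section Centre

variable (m n k l : ℕ) [NeZero m] [NeZero n]
  [Fact ((k : ZMod m) ^ n = 1)] [Fact ((l : ZMod m) * k = l)]

lemma center_of_unit (hind : IsIndex m k n)
    (hU : IsUnit ((k : ZMod m) - 1)) :
    Subgroup.center (PresentedGroup (holderRels m n k l)) = ⊥ := by
  rw [Subgroup.eq_bot_iff_forall]
  intro g hg
  have hga := Subgroup.mem_center_iff.mp hg aa
  have hgb := Subgroup.mem_center_iff.mp hg bb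
  set p := phi m n k l g with hp
  have h1 : (⟨1, 0⟩ : Mdl m n k l) * p = p * ⟨1, 0⟩ := by
    rw [← phi_aa m n k l, hp, ← map_mul, ← map_mul, hga]
  have e1 : (⟨1, 0⟩ : Mdl m n k l) * p = ⟨(k : ZMod m) ^ p.b.val + p.a, p.b⟩ := by
    rw [Mdl.mul_def]
    ext
    · show (k : ZMod m) ^ p.b.val * 1 + p.a + l * Mdl.carry n 0 p.b
        = (k : ZMod m) ^ p.b.val + p.a
      rw [Mdl.carry_zero_left]
      simp
    · show (0 : ZMod n) + p.b = p.b
      simp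
  have e2 : p * (⟨1, 0⟩ : Mdl m n k l) = ⟨p.a + 1, p.b⟩ := by
    rw [Mdl.mul_def]
    ext
    · show (k : ZMod m) ^ (0 : ZMod n).val * p.a + 1 + l * Mdl.carry n p.b 0
        = p.a + 1
      rw [Mdl.carry_zero_right, ZMod.val_zero]
      simp
    · show p.b + 0 = p.b
      simp
  rw [e1, e2, Mdl.mk.injEq] at h1
  have key1 : (k : ZMod m) ^ p.b.val = 1 := by linear_combination h1.1
  have hpb : p.b = 0 := by
    by_contra hb
    have hv : p.b.val ≠ 0 := fun h => hb ((ZMod.val_eq_zero _).mp h)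
    have hmod : k ^ p.b.val ≡ 1 [MOD m] := by
      have hc : ((k ^ p.b.val : ℕ) : ZMod m) = ((1 : ℕ) : ZMod m) := by
        push_cast
        rw [key1]
      exact (ZMod.natCast_eq_natCast_iff _ _ _).mp hc
    have := hind.2.2 _ (Nat.pos_of_ne_zero hv) hmod
    exact absurd (ZMod.val_lt p.b) (by omega)
  have hpa : p.a = 0 := by
    by_cases hn1 : 1 < n
    · haveI : Fact (1 < n) := ⟨hn1⟩
      have h2 : (⟨0, 1⟩ : Mdl m n k l) * p = p * ⟨0, 1⟩ := by
        rw [← phi_bb_of_lt m n k l hn1, hp, ← map_mul, ← map_mul, hgb]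
      have e3 : (⟨0, 1⟩ : Mdl m n k l) * p = ⟨p.a, 1⟩ := by
        rw [Mdl.mul_def]
        ext
        · show (k : ZMod m) ^ p.b.val * 0 + p.a + l * Mdl.carry n 1 p.b = p.a
          rw [hpb, Mdl.carry_zero_right]
          simp
        · show (1 : ZMod n) + p.b = 1
          rw [hpb, add_zero]
      have e4 : p * (⟨0, 1⟩ : Mdl m n k l) = ⟨(k : ZMod m) * p.a, 1⟩ := by
        rw [Mdl.mul_def]
        ext
        · show (k : ZMod m) ^ (1 : ZMod n).val * p.a + 0 + l * Mdl.carry n p.b 1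
            = (k : ZMod m) * p.a
          rw [hpb, Mdl.carry_zero_left, ZMod.val_one]
          simp
        · show p.b + 1 = 1
          rw [hpb, zero_add]
      rw [e3, e4, Mdl.mk.injEq] at h2
      have key2 : ((k : ZMod m) - 1) * p.a = 0 := by linear_combination h2.1.symm
      have := hU.mul_left_cancel (show ((k : ZMod m) - 1) * p.a
          = ((k : ZMod m) - 1) * 0 by rw [key2, mul_zero])
      exact this
    · have hn' : n = 1 := by
        have := Nat.pos_of_ne_zero (NeZero.ne n); omega
      have hk1 : (k : ZMod m) = 1 := by
        have hf : (k : ZMod m) ^ n = 1 := Fact.out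
        rwa [hn', pow_one] at hf
      rw [hk1, sub_self] at hU
      have h01 : (0 : ZMod m) = 1 := isUnit_zero_iff.mp hU
      calc p.a = p.a * 1 := (mul_one _).symm
        _ = p.a * 0 := by rw [h01]
        _ = 0 := mul_zero _
  have hp1 : p = 1 := by
    rw [Mdl.one_def]
    ext
    · exact hpa
    · exact hpb
  calc g = psi m n k l (phi m n k l g) := (psi_phi m n k l g).symm
    _ = psi m n k l 1 := by rw [← hp, hp1]
    _ = 1 := map_one _

lemma center_of_not_unit (hm : 0 < m) (hk : 0 < k)
    (hU : ¬ IsUnit ((k : ZMod m) - 1)) :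
    Subgroup.center (PresentedGroup (holderRels m n k l)) ≠ ⊥ := by
  intro hbot
  have hk1 : 1 ≤ k := hk
  have hcop : ¬ Nat.Coprime (k - 1) m := by
    intro hc
    apply hU
    have hcast : ((k - 1 : ℕ) : ZMod m) = (k : ZMod m) - 1 := by
      push_cast [Nat.cast_sub hk1]
      ring
    rw [← hcast]
    exact (ZMod.isUnit_iff_coprime _ _).mpr hc
  set g0 := Nat.gcd m (k - 1) with hg0
  have hg0dm : g0 ∣ m := Nat.gcd_dvd_left _ _
  have hg0dk : g0 ∣ (k - 1) := Nat.gcd_dvd_right _ _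
  have hg0pos : 0 < g0 := Nat.gcd_pos_of_pos_left _ hm
  have hg0ne1 : g0 ≠ 1 := by
    intro h
    exact hcop (by rwa [Nat.Coprime, Nat.gcd_comm])
  set t := m / g0 with htdef
  have ht_pos : 0 < t := Nat.div_pos (Nat.le_of_dvd hm hg0dm) hg0pos
  have ht_lt : t < m := Nat.div_lt_self hm (by omega)
  have hdvd : m ∣ (k - 1) * t := by
    obtain ⟨s, hs⟩ := hg0dk
    exact ⟨s, by rw [hs, mul_comm g0 s, mul_assoc, htdef, Nat.mul_div_cancel' hg0dm,
      mul_comm]⟩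
  have hzcomm : ∀ g : PresentedGroup (holderRels m n k l),
      g * aa ^ t = aa ^ t * g := by
    intro g
    have hmem : g ∈ Subgroup.centralizer
        {(aa : PresentedGroup (holderRels m n k l)) ^ t} := by
      apply PresentedGroup.generated_by
      intro j
      rw [Subgroup.mem_centralizer_iff]
      intro h hh
      rw [Set.mem_singleton_iff] at hh
      subst hh
      cases j
      · -- j = false, generator b
        show (aa : PresentedGroup (holderRels m n k l)) ^ t * bb = bb * aa ^ t
        rw [apow_b]
        congr 1
        apply apow_congr
        have hle : t ≤ k * t := Nat.le_mul_of_pos_left t hk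
        have hsub : k * t - t = (k - 1) * t := by
          rw [Nat.sub_mul, one_mul]
        exact ((Nat.modEq_iff_dvd' hle).mpr (by rw [hsub]; exact hdvd)).symm
      · -- j = true, generator a
        show (aa : PresentedGroup (holderRels m n k l)) ^ t * aa = aa * aa ^ t
        rw [← pow_succ, ← pow_succ']
    exact (Subgroup.mem_centralizer_iff.mp hmem _ (Set.mem_singleton _)).symm
  have hz : (aa : PresentedGroup (holderRels m n k l)) ^ t ∈ Subgroup.center _ :=
    Subgroup.mem_center_iff.mpr hzcomm
  rw [hbot, Subgroup.mem_bot] at hz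
  have hphi : phi m n k l ((aa : PresentedGroup (holderRels m n k l)) ^ t) = 1 := by
    rw [hz, map_one]
  rw [map_pow, phi_aa, Mdl.a_pow] at hphi
  have ha : ((t : ZMod m)) * 1 = (0 : ZMod m) := by
    have := congrArg Mdl.a hphi
    simpa [Mdl.one_def] using this
  rw [mul_one] at ha
  have := (ZMod.natCast_eq_zero_iff t m).mp ha
  have := Nat.le_of_dvd ht_pos this
  omega

lemma center_iff (hm : 0 < m) (hk : 0 < k) (hind : IsIndex m k n) :
    Subgroup.center (PresentedGroup (holderRels m n k l)) = ⊥
      ↔ IsUnit ((k : ZMod m) - 1) := by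
  constructor
  · intro hc
    by_contra hU
    exact center_of_not_unit m n k l hm hk hU hc
  · exact center_of_unit m n k l hind

end Centre
end Stmt4

/-- The set `R = {k^j - 1 mod m : j ∈ ℤ_n} ⊆ ℤ_m`. -/
def Rset (m n k : ℕ) : Set (ZMod m) :=
  {x | ∃ j : ℕ, j < n ∧ x = (k : ZMod m) ^ j - 1}

/-- The set `L = {-(k^j - 1) mod m : j ∈ ℤ_n} ⊆ ℤ_m`. -/
def Lset (m n k : ℕ) : Set (ZMod m) :=
  {x | ∃ j : ℕ, j < n ∧ x = -((k : ZMod m) ^ j - 1)}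

namespace Stmt4

lemma rset_iff (m n k : ℕ) (hn : 0 < n) (hind : IsIndex m k n) :
    (∃ x ∈ Rset m n k, IsUnit x) ↔ IsUnit ((k : ZMod m) - 1) := by
  constructor
  · rintro ⟨x, ⟨j, hj, rfl⟩, hx⟩
    rw [← geom_sum_mul] at hx
    exact isUnit_of_mul_isUnit_right hx
  · intro hU
    by_cases hn1 : 1 < n
    · exact ⟨(k : ZMod m) - 1, ⟨1, hn1, by rw [pow_one]⟩, hU⟩
    · have hn' : n = 1 := by omega
      have hk1 : (k : ZMod m) = 1 := by
        have h := hind.2.1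
        rw [hn', pow_one] at h
        have h' := (ZMod.natCast_eq_natCast_iff _ _ _).mpr h
        simpa using h'
      refine ⟨(k : ZMod m) ^ 0 - 1, ⟨0, hn, rfl⟩, ?_⟩
      rw [pow_zero]
      rw [hk1] at hU
      exact hU

lemma rl_iff (m n k : ℕ) :
    (∃ x ∈ Rset m n k, IsUnit x) ↔ (∃ x ∈ Lset m n k, IsUnit x) := by
  constructor
  · rintro ⟨x, ⟨j, hj, rfl⟩, hx⟩
    exact ⟨-((k : ZMod m) ^ j - 1), ⟨j, hj, rfl⟩, hx.neg⟩
  · rintro ⟨x, ⟨j, hj, rfl⟩, hx⟩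
    exact ⟨(k : ZMod m) ^ j - 1, ⟨j, hj, rfl⟩, by simpa using hx.neg⟩

end Stmt4


/-- for a finite metacyclic group with Hölder presentation and
`n = ind_m(k)`, the following are equivalent: (a) trivial centre,
(b) `R` contains a unit of `ℤ_m`, (c) `L` contains a unit of `ℤ_m`. -/
theorem stmt_4 (m n k l : ℕ) (hm : 0 < m) (hn : 0 < n) (hk : 0 < k)
    (hl : 0 < l) (h2 : l * (k - 1) ≡ 0 [MOD m]) (hind : IsIndex m k n) :
    (Subgroup.center (HolderGroup m n k l) = ⊥ ↔
        ∃ x ∈ Rset m n k, IsUnit x) ∧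
      ((∃ x ∈ Rset m n k, IsUnit x) ↔ ∃ x ∈ Lset m n k, IsUnit x) := by
  haveI : NeZero m := ⟨hm.ne'⟩
  haveI : NeZero n := ⟨hn.ne'⟩
  haveI : Fact ((k : ZMod m) ^ n = 1) := by
    constructor
    have h := (ZMod.natCast_eq_natCast_iff _ _ _).mpr hind.2.1
    push_cast at h
    exact h
  haveI : Fact ((l : ZMod m) * k = l) := by
    constructor
    have hc := (ZMod.natCast_eq_natCast_iff _ 0 _).mpr h2
    push_cast [Nat.cast_sub (show 1 ≤ k from hk)] at hc
    linear_combination hc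
  constructor
  · rw [Stmt4.rset_iff m n k hn hind]
    exact Stmt4.center_iff m n k l hm hk hind
  · exact Stmt4.rl_iff m n k
end

section
/- In G = G(m,n,k) with trivial centre, every right commutation map ρ(a^r b^s) (sending x to [x, a^r b^s]) equals the mu-map μ(k^s - 1, r·k^s), and every left commutation map λ(a^r b^s) (sending x to [a^r b^s, x]) equals μ(-(k^s - 1), -r·k^s). -/
/-- The value of the mu-map `μ(x,y)` on the element `a^i b^j`:
`(a^i b^j) μ(x,y) = a^N` with `N ≡ x·i·k^j − y·(k^j − 1) (mod m)`. -/
def muApply (m n k : ℕ) (x y : ZMod m) (i j : ℕ) : McGroup m n k :=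
  McGroup.a m n k ^ (x * (i : ZMod m) * (k : ZMod m) ^ j -
    y * ((k : ZMod m) ^ j - 1)).val


section mcHelpers
variable (m n k : ℕ)

local notation "A" => McGroup.a m n k
local notation "B" => McGroup.b m n k

lemma rel_mem_one {w : FreeGroup Bool} (hw : w ∈ mcRels m n k) :
    (PresentedGroup.mk (mcRels m n k) w : McGroup m n k) = 1 := by
  apply (QuotientGroup.eq_one_iff _).2
  exact Subgroup.subset_normalClosure hw

lemma rel_a : A ^ m = 1 := by
  have := rel_mem_one m n k (w := FreeGroup.of true ^ m) (by left; rfl)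
  simp [McGroup.a, PresentedGroup.of] at this
  exact this

lemma rel_ab : B⁻¹ * A * B = A ^ k := by
  have := rel_mem_one m n k
    (w := (FreeGroup.of false)⁻¹ * FreeGroup.of true * FreeGroup.of false *
      (FreeGroup.of true ^ k)⁻¹) (by right; right; rfl)
  simp only [map_mul, map_inv, map_pow] at this
  have h : B⁻¹ * A * B * (A ^ k)⁻¹ = 1 := this
  have := mul_eq_one_iff_eq_inv.1 h
  simpa using this

lemma conj_zpow_b (u : ℤ) : B⁻¹ * A ^ u * B = A ^ (u * (k : ℤ)) := by
  have h : B⁻¹ * A * B = A ^ k := rel_ab m n k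
  have h2 : B⁻¹ * A ^ u * B = (B⁻¹ * A * B) ^ u := by
    simpa [MulAut.conj_apply, mul_assoc] using map_zpow (MulAut.conj B⁻¹) A u
  rw [h] at h2
  rw [h2, ← zpow_natCast A k, ← zpow_mul, mul_comm]

lemma swap1 (u : ℤ) : A ^ u * B = B * A ^ (u * (k : ℤ)) := by
  rw [← conj_zpow_b m n k u]; group

lemma swap (s : ℕ) (u : ℤ) : A ^ u * B ^ s = B ^ s * A ^ (u * (k : ℤ) ^ s) := by
  induction s generalizing u with
  | zero => simp
  | succ t ih =>
    rw [pow_succ, ← mul_assoc, ih, mul_assoc, swap1, ← mul_assoc, ← pow_succ]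
    congr 1
    ring

lemma key (i j r s : ℕ) :
    (A ^ i * B ^ j)⁻¹ * (A ^ r * B ^ s)⁻¹ * (A ^ i * B ^ j) * (A ^ r * B ^ s) =
    A ^ ((i : ℤ) * (k:ℤ) ^ j * ((k:ℤ) ^ s - 1) - (r:ℤ) * (k:ℤ) ^ s * ((k:ℤ) ^ j - 1)) := by
  have hx : A ^ i * B ^ j = B ^ j * A ^ ((i : ℤ) * (k:ℤ) ^ j) := by
    rw [← zpow_natCast A i, swap]
  have hy : A ^ r * B ^ s = B ^ s * A ^ ((r : ℤ) * (k:ℤ) ^ s) := by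
    rw [← zpow_natCast A r, swap]
  have hxy : (A ^ i * B ^ j) * (A ^ r * B ^ s) =
      B ^ (j + s) * A ^ ((i : ℤ) * (k:ℤ) ^ j * (k:ℤ) ^ s + (r : ℤ) * (k:ℤ) ^ s) := by
    rw [hx, hy, mul_assoc, ← mul_assoc (A ^ ((i : ℤ) * (k:ℤ) ^ j)), swap,
      mul_assoc, ← zpow_add, ← mul_assoc, ← pow_add]
  have hyx : (A ^ r * B ^ s) * (A ^ i * B ^ j) =
      B ^ (j + s) * A ^ ((r : ℤ) * (k:ℤ) ^ s * (k:ℤ) ^ j + (i : ℤ) * (k:ℤ) ^ j) := by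
    rw [hx, hy, mul_assoc, ← mul_assoc (A ^ ((r : ℤ) * (k:ℤ) ^ s)), swap,
      mul_assoc, ← zpow_add, ← mul_assoc, ← pow_add, add_comm s j]
  calc (A ^ i * B ^ j)⁻¹ * (A ^ r * B ^ s)⁻¹ * (A ^ i * B ^ j) * (A ^ r * B ^ s)
      = ((A ^ r * B ^ s) * (A ^ i * B ^ j))⁻¹ * ((A ^ i * B ^ j) * (A ^ r * B ^ s)) := by
        group
    _ = (B ^ (j + s) * A ^ ((r : ℤ) * (k:ℤ) ^ s * (k:ℤ) ^ j + (i : ℤ) * (k:ℤ) ^ j))⁻¹ *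
        (B ^ (j + s) * A ^ ((i : ℤ) * (k:ℤ) ^ j * (k:ℤ) ^ s + (r : ℤ) * (k:ℤ) ^ s)) := by
        rw [hxy, hyx]
    _ = A ^ (((i : ℤ) * (k:ℤ) ^ j * (k:ℤ) ^ s + (r : ℤ) * (k:ℤ) ^ s) -
          ((r : ℤ) * (k:ℤ) ^ s * (k:ℤ) ^ j + (i : ℤ) * (k:ℤ) ^ j)) := by
        rw [mul_inv_rev, mul_assoc, ← mul_assoc _ (B ^ (j+s)), inv_mul_cancel,
          one_mul, ← zpow_neg, ← zpow_add, neg_add_eq_sub]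
    _ = A ^ ((i : ℤ) * (k:ℤ) ^ j * ((k:ℤ) ^ s - 1) - (r:ℤ) * (k:ℤ) ^ s * ((k:ℤ) ^ j - 1)) := by
        congr 1
        ring

lemma a_zpow_eq (hm : 0 < m) {z w : ℤ} (h : (z : ZMod m) = (w : ZMod m)) :
    A ^ z = A ^ w := by
  have hd : (m : ℤ) ∣ z - w := by
    have h2 : z ≡ w [ZMOD (m:ℕ)] := (ZMod.intCast_eq_intCast_iff _ _ _).1 h
    exact Int.ModEq.dvd h2.symm
  obtain ⟨q, hq⟩ := hd
  have h1 : A ^ (z - w) = 1 := by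
    rw [hq, zpow_mul, zpow_natCast, rel_a, one_zpow]
  have h3 : A ^ z = A ^ w * A ^ (z - w) := by
    rw [← zpow_add]; congr 1; ring
  rw [h3, h1, mul_one]

end mcHelpers

/-- in `G(m,n,k)` with trivial centre, the right commutation map
`ρ(a^r b^s) : x ↦ [x, a^r b^s]` equals the mu-map `μ(k^s − 1, r·k^s)`, and the
left commutation map `λ(a^r b^s) : x ↦ [a^r b^s, x]` equals
`μ(−(k^s − 1), −r·k^s)` (as maps on `G`, every element of which has the form
`a^i b^j`). -/
theorem stmt_5 (m n k : ℕ) (hm : 0 < m) (hk : 0 < k)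
    (hcop : Nat.gcd m (k - 1) = 1) (hind : IsIndex m k n)
    (r s : ℕ) :
    ∀ i j : ℕ,
      ((McGroup.a m n k ^ i * McGroup.b m n k ^ j)⁻¹ *
          (McGroup.a m n k ^ r * McGroup.b m n k ^ s)⁻¹ *
          (McGroup.a m n k ^ i * McGroup.b m n k ^ j) *
          (McGroup.a m n k ^ r * McGroup.b m n k ^ s) =
        muApply m n k ((k : ZMod m) ^ s - 1) ((r : ZMod m) * (k : ZMod m) ^ s)
          i j) ∧
      ((McGroup.a m n k ^ r * McGroup.b m n k ^ s)⁻¹ *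
          (McGroup.a m n k ^ i * McGroup.b m n k ^ j)⁻¹ *
          (McGroup.a m n k ^ r * McGroup.b m n k ^ s) *
          (McGroup.a m n k ^ i * McGroup.b m n k ^ j) =
        muApply m n k (-((k : ZMod m) ^ s - 1))
          (-((r : ZMod m) * (k : ZMod m) ^ s)) i j) := by
  haveI : NeZero m := ⟨hm.ne'⟩
  intro i j
  constructor
  · rw [key m n k i j r s]
    unfold muApply
    rw [← zpow_natCast (McGroup.a m n k) (ZMod.val _)]
    apply a_zpow_eq m n k hm
    push_cast
    rw [ZMod.natCast_val, ZMod.cast_id]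
    ring
  · rw [key m n k r s i j]
    unfold muApply
    rw [← zpow_natCast (McGroup.a m n k) (ZMod.val _)]
    apply a_zpow_eq m n k hm
    push_cast
    rw [ZMod.natCast_val, ZMod.cast_id]
    ring
end

section
/- For G = G(m,n,k) with trivial centre and x₁, x₂, y₁, y₂ ∈ ℤ_m, the containers C(x₁,y₁) and C(x₂,y₂) have nonempty intersection if and only if x₁ ≡ x₂ (mod m). -/
/-- The mu-map `μ(x,y)` of `G = G(m,n,k)`, acting on elements of `G` written in
the normal form `a^i b^j` (identified with pairs `(i,j) ∈ ℤ_m × ℤ_n`):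
`(a^i b^j) μ(x,y) = a^N` with `N ≡ x·i·k^j − y·(k^j − 1) (mod m)`. -/
def Mu (m n k : ℕ) (x y : ZMod m) : Function.End (ZMod m × ZMod n) :=
  fun p => (x * p.1 * (k : ZMod m) ^ p.2.val -
    y * ((k : ZMod m) ^ p.2.val - 1), 0)

/-- The container `C(x,y) = {μ(x, yz) : z ∈ ℤ_m}`. -/
def Container (m n k : ℕ) (x y : ZMod m) :
    Set (Function.End (ZMod m × ZMod n)) :=
  {f | ∃ z : ZMod m, f = Mu m n k x (y * z)}
/-- two containers `C(x₁,y₁)` and `C(x₂,y₂)` intersect iff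
`x₁ ≡ x₂ (mod m)`. -/
theorem stmt_7 (m n k : ℕ) (hm : 0 < m) (hk : 0 < k)
    (hcop : Nat.gcd m (k - 1) = 1) (hind : IsIndex m k n)
    (x₁ x₂ y₁ y₂ : ZMod m) :
    (Container m n k x₁ y₁ ∩ Container m n k x₂ y₂).Nonempty ↔ x₁ = x₂ := by
  haveI : NeZero n := ⟨hind.1.ne'⟩
  constructor
  · rintro ⟨f, ⟨z₁, rfl⟩, ⟨z₂, h⟩⟩
    have h1 := congrArg Prod.fst (congrFun h ((1 : ZMod m), (0 : ZMod n)))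
    simpa [Mu, ZMod.val_zero] using h1
  · rintro rfl
    refine ⟨Mu m n k x₁ 0, ⟨0, by rw [mul_zero]⟩, ⟨0, by rw [mul_zero]⟩⟩
end

section
/- For G = G(m,n,k) with trivial centre, x, y ∈ ℤ_m, and z₁, z₂ ∈ ℤ_m: μ(x, y·z₁) = μ(x, y·z₂) as maps G → G if and only if z₁ ≡ z₂ (mod m/gcd(m,y)). -/
private lemma stmt8_cancel_iff (m c a b : ℕ) (hm : 0 < m) :
    c * a ≡ c * b [MOD m] ↔ a ≡ b [MOD m / Nat.gcd m c] := by
  constructor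
  · exact fun h => h.cancel_left_div_gcd hm
  · intro h
    set g := Nat.gcd m c with hg
    obtain ⟨m', hm'⟩ := Nat.gcd_dvd_left m c
    obtain ⟨c', hc'⟩ := Nat.gcd_dvd_right m c
    have hg0 : 0 < g := Nat.gcd_pos_of_pos_left _ hm
    have hdiv : m / g = m' := by rw [hm']; exact Nat.mul_div_cancel_left m' hg0
    rw [hdiv] at h
    rw [Nat.modEq_iff_dvd]
    have : (m' : ℤ) ∣ (b : ℤ) - a := by exact_mod_cast (Nat.modEq_iff_dvd).mp h
    obtain ⟨t, ht⟩ := this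
    refine ⟨c' * t, ?_⟩
    have hcb : (c : ℤ) * b - c * a = c * ((b : ℤ) - a) := by ring
    push_cast
    rw [hcb, ht, hm', hc']
    push_cast
    rw [← hc']
    ring

private lemma stmt8_mu_inj (m n k : ℕ) (hm : 1 < m) (hk : 0 < k)
    (hcop : Nat.gcd m (k - 1) = 1) (hind : IsIndex m k n)
    (x w₁ w₂ : ZMod m) :
    Mu m n k x w₁ = Mu m n k x w₂ ↔ w₁ = w₂ := by
  have hn : 1 < n := by
    by_contra hn
    interval_cases n
    · exact absurd hind.1 (by omega)
    · have h1 : k ^ 1 ≡ 1 [MOD m] := hind.2.1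
      rw [pow_one] at h1
      have hd : m ∣ k - 1 := (Nat.modEq_iff_dvd' hk).mp h1.symm
      have := Nat.gcd_eq_left hd
      omega
  constructor
  · intro h
    have h1 := congrFun h (0, (1 : ZMod n))
    simp only [Mu, ZMod.val_one_eq_one_mod] at h1
    rw [Nat.mod_eq_of_lt hn] at h1
    have h2 := congrArg Prod.fst h1
    simp only [mul_zero, zero_mul, pow_one, zero_sub, neg_inj] at h2
    have hu : IsUnit ((k : ZMod m) - 1) := by
      have hcast : ((k - 1 : ℕ) : ZMod m) = (k : ZMod m) - 1 := by
        push_cast [Nat.cast_sub hk]; ring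
      rw [← hcast]
      haveI : NeZero m := ⟨by omega⟩
      rw [ZMod.isUnit_iff_coprime]
      exact Nat.Coprime.symm hcop
    exact hu.mul_right_cancel h2
  · intro h; rw [h]

/-- `μ(x, y·z₁) = μ(x, y·z₂)` iff `z₁ ≡ z₂ (mod m/gcd(m,y))`. -/
theorem stmt_8 (m n k : ℕ) (hm : 0 < m) (hk : 0 < k)
    (hcop : Nat.gcd m (k - 1) = 1) (hind : IsIndex m k n)
    (x y z₁ z₂ : ZMod m) :
    Mu m n k x (y * z₁) = Mu m n k x (y * z₂) ↔
      z₁.val ≡ z₂.val [MOD m / Nat.gcd m y.val] := by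
  rcases Nat.lt_or_ge 1 m with hm1 | hm1
  · haveI : NeZero m := ⟨by omega⟩
    have A : y * z₁ = y * z₂ ↔ y.val * z₁.val ≡ y.val * z₂.val [MOD m] := by
      rw [← ZMod.natCast_eq_natCast_iff]
      push_cast
      simp [ZMod.natCast_val, ZMod.cast_id]
    rw [stmt8_mu_inj m n k hm1 hk hcop hind, A,
      stmt8_cancel_iff m y.val z₁.val z₂.val hm]
  · have hmeq : m = 1 := by omega
    subst hmeq
    apply iff_of_true
    · funext p
      exact Prod.ext (Subsingleton.elim _ _) rfl
    · simp [Nat.modEq_one]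
end

section
/- For G = G(m,n,k) with trivial centre and x, y ∈ ℤ_m, the container C(x,y) = {μ(x, yz) : z ∈ ℤ_m} has exactly m/gcd(m,y) elements. -/
/-- `μ(x,·)` is injective in its second argument. -/
lemma mu_inj (m n k : ℕ) (hm : 0 < m) (hk : 0 < k)
    (hcop : Nat.gcd m (k - 1) = 1) (hind : IsIndex m k n) (x : ZMod m) :
    Function.Injective (Mu m n k x) := by
  rcases Nat.lt_or_ge n 2 with hn | hn
  · -- n = 1, so m ∣ k - 1, so m = 1
    interval_cases n
    · exact absurd hind.1 (lt_irrefl 0)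
    · have h1 : k ^ 1 ≡ 1 [MOD m] := hind.2.1
      rw [pow_one] at h1
      have hdvd : m ∣ k - 1 := (Nat.modEq_iff_dvd' hk).mp h1.symm
      have : m = 1 := Nat.eq_one_of_dvd_one (hcop ▸ Nat.dvd_gcd dvd_rfl hdvd)
      subst this
      intro w w' _
      exact Subsingleton.elim w w'
  · haveI : Fact (1 < n) := ⟨hn⟩
    intro w w' h
    have h1 := congrFun h (0, (1 : ZMod n))
    simp only [Mu, ZMod.val_one, pow_one, mul_zero, zero_mul, zero_sub, Prod.mk.injEq] at h1
    have hu : IsUnit ((k : ZMod m) - 1) := by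
      have : ((k - 1 : ℕ) : ZMod m) = (k : ZMod m) - 1 := by
        push_cast [Nat.cast_sub hk]; ring
      rw [← this]
      exact (ZMod.isUnit_iff_coprime _ _).mpr (Nat.coprime_comm.mp hcop)
    have := h1.1
    exact hu.mul_left_cancel (by linear_combination -this)

/-- the container `C(x,y)` has exactly `m / gcd(m,y)` elements. -/
theorem stmt_9 (m n k : ℕ) (hm : 0 < m) (hk : 0 < k)
    (hcop : Nat.gcd m (k - 1) = 1) (hind : IsIndex m k n)
    (x y : ZMod m) :
    (Container m n k x y).ncard = m / Nat.gcd m y.val := by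
  have h1 : Container m n k x y = Mu m n k x '' (AddSubgroup.zmultiples y : Set (ZMod m)) := by
    ext f
    constructor
    · rintro ⟨z, rfl⟩
      refine ⟨y * z, ⟨(z.val : ℤ), ?_⟩, rfl⟩
      haveI : NeZero m := ⟨hm.ne'⟩
      show (z.val : ℤ) • y = y * z
      rw [zsmul_eq_mul]
      push_cast
      rw [ZMod.natCast_val, ZMod.cast_id]; ring
    · rintro ⟨w, ⟨c, rfl⟩, rfl⟩
      refine ⟨(c : ZMod m), ?_⟩
      simp only [zsmul_eq_mul]; ring_nf
  haveI : NeZero m := ⟨hm.ne'⟩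
  rw [h1, Set.ncard_image_of_injective _ (mu_inj m n k hm hk hcop hind x),
    ← Nat.card_coe_set_eq, SetLike.coe_sort_coe, Nat.card_zmultiples]
  conv_lhs => rw [show y = ((y.val : ℕ) : ZMod m) from (ZMod.natCast_rightInverse y).symm]
  exact ZMod.addOrderOf_coe y.val hm.ne'
end

section
/- For G = G(m,n,k) with trivial centre and x, y₁, y₂ ∈ ℤ_m: C(x, y₁) ⊆ C(x, y₂) if and only if there exists z ∈ ℤ_m with y₁ ≡ y₂·z (mod m), i.e., iff y₁ lies in the ideal generated by y₂ in ℤ_m. -/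
/-- `C(x,y₁) ⊆ C(x,y₂)` iff `y₁ = y₂·z` for some `z ∈ ℤ_m`. -/
theorem stmt_11 (m n k : ℕ) (hm : 0 < m) (hk : 0 < k)
    (hcop : Nat.gcd m (k - 1) = 1) (hind : IsIndex m k n)
    (x y₁ y₂ : ZMod m) :
    Container m n k x y₁ ⊆ Container m n k x y₂ ↔
      ∃ z : ZMod m, y₁ = y₂ * z := by
  constructor
  · intro hsub
    rcases eq_or_lt_of_le (show 1 ≤ m from hm) with hm1 | hm2
    · subst hm1; exact ⟨1, Subsingleton.elim _ _⟩
    -- m ≥ 2, so n ≥ 2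
    obtain ⟨hn0, hkn, hmin⟩ := hind
    have hn2 : 1 < n := by
      rcases Nat.lt_or_ge n 2 with h | h
      · exfalso
        have hn1 : n = 1 := by omega
        subst hn1
        have hk1 : k ≡ 1 [MOD m] := by simpa using hkn
        have hdvd : m ∣ k - 1 := (Nat.modEq_iff_dvd' hk).mp hk1.symm
        have := Nat.gcd_eq_left hdvd
        omega
      · exact h
    haveI : Fact (1 < n) := ⟨hn2⟩
    have hmem : Mu m n k x (y₁ * 1) ∈ Container m n k x y₂ :=
      hsub ⟨1, rfl⟩
    obtain ⟨z, hz⟩ := hmem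
    have heq := congrFun hz (0, 1)
    simp only [Mu, ZMod.val_one, pow_one, mul_zero, zero_mul, Prod.mk.injEq] at heq
    have h1 : y₁ * ((k : ZMod m) - 1) = y₂ * z * ((k : ZMod m) - 1) := by
      have := heq.1
      ring_nf at this ⊢
      linear_combination -this
    have hu : IsUnit ((k : ZMod m) - 1) := by
      have hc : ((k - 1 : ℕ) : ZMod m) = (k : ZMod m) - 1 := by
        push_cast [Nat.cast_sub hk]; ring
      rw [← hc]
      exact (ZMod.isUnit_iff_coprime _ _).mpr
        (Nat.coprime_comm.mp hcop)
    exact ⟨z, hu.mul_right_cancel h1⟩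
  · rintro ⟨z, rfl⟩ f ⟨w, rfl⟩
    exact ⟨z * w, by rw [mul_assoc]⟩
end

section
/- For G = G(m,n,k) with trivial centre and S ⊆ ℤ_m a base, the subsemigroup Σ_G(S) of M(G) generated by Γ_μ(S) = {μ(s,z) : s ∈ S, z ∈ ℤ_m} equals Γ_μ(S) ∪ Π_μ(S), where Π_μ(S) = {μ(s·s*, s*·z) : s ∈ S, s* ∈ S*, z ∈ ℤ_m} and S* is the multiplicative closure of S in ℤ_m. -/
/-- The multiplicative closure `S*` of `S` in `ℤ_m`. -/
def mulClosure (m : ℕ) (S : Set (ZMod m)) : Set (ZMod m) :=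
  Subsemigroup.closure S

/-- `S ⊆ ℤ_m` is a base if it contains `0` and at least one unit of `ℤ_m`. -/
def IsBase (m : ℕ) (S : Set (ZMod m)) : Prop :=
  (0 : ZMod m) ∈ S ∧ ∃ u ∈ S, IsUnit u

/-- The set `Γ_μ(S) = {μ(s,z) : s ∈ S, z ∈ ℤ_m}` of mu-generators. -/
def GammaMu (m n k : ℕ) (S : Set (ZMod m)) :
    Set (Function.End (ZMod m × ZMod n)) :=
  {f | ∃ s ∈ S, ∃ z : ZMod m, f = Mu m n k s z}

/-- The set `Π_μ(S) = {μ(s·s*, s*·z) : s ∈ S, s* ∈ S*, z ∈ ℤ_m}` of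
mu-products. -/
def PiMu (m n k : ℕ) (S : Set (ZMod m)) :
    Set (Function.End (ZMod m × ZMod n)) :=
  {f | ∃ s ∈ S, ∃ t ∈ mulClosure m S, ∃ z : ZMod m,
    f = Mu m n k (s * t) (t * z)}

/-- The `G`-semigroup `Σ_G(S)`: the subsemigroup of `M(G)` (under composition)
generated by `Γ_μ(S)`. -/
def SigmaG (m n k : ℕ) (S : Set (ZMod m)) :
    Set (Function.End (ZMod m × ZMod n)) :=
  Subsemigroup.closure (GammaMu m n k S)

lemma mu_congr (m n k : ℕ) {x₁ y₁ x₂ y₂ : ZMod m} (hx : x₁ = x₂)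
    (hy : y₁ = y₂) : Mu m n k x₁ y₁ = Mu m n k x₂ y₂ := by rw [hx, hy]

lemma mu_comp (m n k : ℕ) (a b c d : ZMod m) :
    Mu m n k a b * Mu m n k c d = Mu m n k (a * c) (a * d) := by
  funext p
  show Mu m n k a b (Mu m n k c d p) = _
  have h0 : ((0 : ZMod n)).val = 0 := by
    cases n
    · rfl
    · exact ZMod.val_zero
  simp only [Mu, h0, pow_zero]
  refine Prod.ext ?_ rfl
  ring

/-- for `S` a base, `Σ_G(S) = Γ_μ(S) ∪ Π_μ(S)`. -/
theorem stmt_12 (m n k : ℕ) (hm : 0 < m) (hk : 0 < k)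
    (hcop : Nat.gcd m (k - 1) = 1) (hind : IsIndex m k n)
    (S : Set (ZMod m)) (hS : IsBase m S) :
    SigmaG m n k S = GammaMu m n k S ∪ PiMu m n k S := by
  have sub_cl : ∀ t ∈ S, t ∈ mulClosure m S := fun t ht =>
    Subsemigroup.subset_closure ht
  have mul_cl : ∀ t₁ ∈ mulClosure m S, ∀ t₂ ∈ mulClosure m S,
      t₁ * t₂ ∈ mulClosure m S := fun t₁ h₁ t₂ h₂ =>
    Subsemigroup.mul_mem _ h₁ h₂
  apply Set.Subset.antisymm
  · intro x hx
    refine Subsemigroup.closure_induction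
      (fun y hy => Or.inl hy) ?_ hx
    rintro x y _ _ (⟨s₁, hs₁, z₁, rfl⟩ | ⟨s₁, hs₁, t₁, ht₁, z₁, rfl⟩)
      (⟨s₂, hs₂, z₂, rfl⟩ | ⟨s₂, hs₂, t₂, ht₂, z₂, rfl⟩)
    · exact Or.inr ⟨s₂, hs₂, s₁, sub_cl s₁ hs₁, z₂, by
        rw [mu_comp]; exact mu_congr m n k (by ring) rfl⟩
    · exact Or.inr ⟨s₂, hs₂, s₁ * t₂, mul_cl _ (sub_cl s₁ hs₁) _ ht₂, z₂, by
        rw [mu_comp]; exact mu_congr m n k (by ring) (by ring)⟩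
    · exact Or.inr ⟨s₂, hs₂, s₁ * t₁, mul_cl _ (sub_cl s₁ hs₁) _ ht₁, z₂, by
        rw [mu_comp]; exact mu_congr m n k (by ring) (by ring)⟩
    · exact Or.inr ⟨s₂, hs₂, s₁ * t₁ * t₂,
        mul_cl _ (mul_cl _ (sub_cl s₁ hs₁) _ ht₁) _ ht₂, z₂, by
        rw [mu_comp]; exact mu_congr m n k (by ring) (by ring)⟩
  · intro x hx
    have key : ∀ t ∈ mulClosure m S, Mu m n k t 0 ∈ SigmaG m n k S := by
      intro t ht
      refine Subsemigroup.closure_induction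
        (fun s hs => Subsemigroup.subset_closure ⟨s, hs, 0, rfl⟩) ?_ ht
      intro a b _ _ ha hb
      have : Mu m n k (a * b) 0 = Mu m n k a 0 * Mu m n k b 0 := by
        rw [mu_comp]; exact mu_congr m n k rfl (by ring)
      rw [this]
      exact Subsemigroup.mul_mem _ ha hb
    rcases hx with ⟨s, hs, z, rfl⟩ | ⟨s, hs, t, ht, z, rfl⟩
    · exact Subsemigroup.subset_closure ⟨s, hs, z, rfl⟩
    · have : Mu m n k (s * t) (t * z) = Mu m n k t 0 * Mu m n k s z := by
        rw [mu_comp]; exact mu_congr m n k (by ring) (by ring)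
      rw [this]
      exact Subsemigroup.mul_mem _ (key t ht)
        (Subsemigroup.subset_closure ⟨s, hs, z, rfl⟩)
end
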